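/- arXiv:1810.07569 — 5 statements merged into one kernel-verified Lean document; each statement's English description precedes it below -/
import Mathlib

section
/- Let θ ∈ (0,π), ψ ∈ [0,π), and φ ∈ (0,2π) ∪ (2π,4π). Define θ₋ = arccot( (−sin ψ · cos(φ/2) + cos ψ · sin(φ/2) · cos θ) / (sin(φ/2) · sin θ) ) with arccot taking values in (0,π), φ₋ = 2π + ( 2·arccos( cos(φ/2)·cos ψ + sin(φ/2)·sin ψ·cos θ ) − 2π )·sgn(sin(φ/2)), and φ₁ = 2ψ. Then R(θ,ψ,φ) = R(0,0,φ₁)·R(θ₋,0,φ₋). -/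
open Real

/-- The SU(2) rotation by angle φ about the axis (sin θ cos ψ, sin θ sin ψ, cos θ). -/
noncomputable def Rot (θ ψ φ : ℝ) : Matrix (Fin 2) (Fin 2) ℂ :=
  !![(Real.cos (φ/2) : ℂ) - Complex.I * (Real.sin (φ/2) : ℂ) * (Real.cos θ : ℂ),
     -Complex.I * (Real.sin (φ/2) : ℂ) * (Real.sin θ : ℂ) * Complex.exp (-(Complex.I * (ψ : ℂ)));
     -Complex.I * (Real.sin (φ/2) : ℂ) * (Real.sin θ : ℂ) * Complex.exp (Complex.I * (ψ : ℂ)),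
     (Real.cos (φ/2) : ℂ) + Complex.I * (Real.sin (φ/2) : ℂ) * (Real.cos θ : ℂ)]

/-- Inverse cotangent, valued in (0, π). -/
noncomputable def arccot (x : ℝ) : ℝ := π/2 - Real.arctan x

/-- The sign function. -/
noncomputable def sgn (x : ℝ) : ℝ := Real.sign x

set_option maxHeartbeats 1000000 in
theorem stmt1 (θ ψ φ : ℝ) (hθ : θ ∈ Set.Ioo 0 π) (hψ : ψ ∈ Set.Ico 0 π)
    (hφ : φ ∈ Set.Ioo 0 (2*π) ∪ Set.Ioo (2*π) (4*π)) :
    Rot θ ψ φ =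
      Rot 0 0 (2*ψ) *
      Rot (arccot ((-Real.sin ψ * Real.cos (φ/2) + Real.cos ψ * Real.sin (φ/2) * Real.cos θ) /
              (Real.sin (φ/2) * Real.sin θ))) 0
          (2*π + (2 * Real.arccos (Real.cos (φ/2) * Real.cos ψ +
              Real.sin (φ/2) * Real.sin ψ * Real.cos θ) - 2*π) * sgn (Real.sin (φ/2))) := by
  obtain ⟨hθ0, hθπ⟩ := hθ
  have hsθ : 0 < Real.sin θ := Real.sin_pos_of_pos_of_lt_pi hθ0 hθπ
  have hscase : 0 < Real.sin (φ/2) ∨ Real.sin (φ/2) < 0 := by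
    rcases hφ with h | h
    · exact Or.inl (Real.sin_pos_of_pos_of_lt_pi (by linarith [h.1]) (by linarith [h.2]))
    · right
      have h1 : Real.sin (φ/2) = -Real.sin (φ/2 - π) := by
        rw [Real.sin_sub_pi]; ring
      have h2 : 0 < Real.sin (φ/2 - π) :=
        Real.sin_pos_of_pos_of_lt_pi (by linarith [h.1]) (by linarith [h.2])
      linarith
  set c := Real.cos (φ/2) with hcdef
  set s := Real.sin (φ/2) with hsdef
  set A := c * Real.cos ψ + s * Real.sin ψ * Real.cos θ with hAdef
  set B := -Real.sin ψ * c + Real.cos ψ * s * Real.cos θ with hBdef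
  set x := B / (s * Real.sin θ) with hxdef
  have hs0 : s ≠ 0 := by rcases hscase with h | h; exacts [ne_of_gt h, ne_of_lt h]
  have hs2 : 0 < s^2 := by rcases hscase with h | h <;> nlinarith
  have hpyth : A^2 + B^2 + s^2 * Real.sin θ^2 = 1 := by
    have h1 := Real.sin_sq_add_cos_sq ψ
    have h2 := Real.sin_sq_add_cos_sq θ
    have h3 := Real.sin_sq_add_cos_sq (φ/2)
    rw [hAdef, hBdef, hcdef, hsdef]
    linear_combination (Real.cos (φ/2)^2 + Real.sin (φ/2)^2 * Real.cos θ^2) * h1 +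
      Real.sin (φ/2)^2 * h2 + h3
  have hApos : 0 < 1 - A^2 := by nlinarith [sq_nonneg B, mul_pos hs2 (pow_pos hsθ 2)]
  have hA1 : A ≤ 1 := by nlinarith
  have hA1' : -1 ≤ A := by nlinarith
  set D := Real.sqrt (1 - A^2) with hDdef
  have hDpos : 0 < D := Real.sqrt_pos.mpr hApos
  have hD2 : D^2 = 1 - A^2 := Real.sq_sqrt (le_of_lt hApos)
  have hne : s * Real.sin θ ≠ 0 := mul_ne_zero hs0 (ne_of_gt hsθ)
  have hxB : x * (s * Real.sin θ) = B := by rw [hxdef]; field_simp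
  obtain ⟨σ, hσ2, hσs, hC, hS⟩ :
      ∃ σ : ℝ, σ^2 = 1 ∧ 0 < σ * s ∧
        Real.cos ((2*π + (2 * Real.arccos A - 2*π) * sgn s)/2) = A ∧
        Real.sin ((2*π + (2 * Real.arccos A - 2*π) * sgn s)/2) = σ * D := by
    rcases hscase with h | h
    · have hsgn : sgn s = 1 := by simp [sgn, Real.sign_of_pos h]
      refine ⟨1, by norm_num, by simpa using h, ?_, ?_⟩
      · rw [hsgn, show (2*π + (2 * Real.arccos A - 2*π) * 1)/2 = Real.arccos A by ring]
        exact Real.cos_arccos hA1' hA1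
      · rw [hsgn, show (2*π + (2 * Real.arccos A - 2*π) * 1)/2 = Real.arccos A by ring,
          Real.sin_arccos, one_mul, hDdef]
    · have hsgn : sgn s = -1 := by simp [sgn, Real.sign_of_neg h]
      refine ⟨-1, by norm_num, by nlinarith, ?_, ?_⟩
      · rw [hsgn, show (2*π + (2 * Real.arccos A - 2*π) * (-1))/2 = 2*π - Real.arccos A by ring,
          Real.cos_sub, Real.cos_two_pi, Real.sin_two_pi, Real.cos_arccos hA1' hA1]
        ring
      · rw [hsgn, show (2*π + (2 * Real.arccos A - 2*π) * (-1))/2 = 2*π - Real.arccos A by ring,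
          Real.sin_sub, Real.cos_two_pi, Real.sin_two_pi, Real.sin_arccos, hDdef]
        ring
  have hσ0 : σ ≠ 0 := by intro h; rw [h] at hσ2; norm_num at hσ2
  have hσpos : 0 < σ * (s * Real.sin θ) := by nlinarith
  have hθm_cos : Real.cos (arccot x) = x / Real.sqrt (1 + x^2) := by
    rw [arccot, Real.cos_pi_div_two_sub, Real.sin_arctan]
  have hθm_sin : Real.sin (arccot x) = 1 / Real.sqrt (1 + x^2) := by
    rw [arccot, Real.sin_pi_div_two_sub, Real.cos_arctan]
  have hx2 : x^2 * (s * Real.sin θ)^2 = B^2 := by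
    linear_combination (x * (s * Real.sin θ) + B) * hxB
  have h1 : 1 + x^2 = (D / (σ * (s * Real.sin θ)))^2 := by
    field_simp
    nlinarith [hx2, hD2, hσ2, hpyth]
  have hsqrt : Real.sqrt (1 + x^2) = D / (σ * (s * Real.sin θ)) := by
    rw [h1, Real.sqrt_sq (div_nonneg hDpos.le hσpos.le)]
  have hSs : Real.sin ((2*π + (2 * Real.arccos A - 2*π) * sgn s)/2) * Real.sin (arccot x)
      = s * Real.sin θ := by
    rw [hS, hθm_sin, hsqrt]
    field_simp
    linear_combination hσ2
  have hSc : Real.sin ((2*π + (2 * Real.arccos A - 2*π) * sgn s)/2) * Real.cos (arccot x)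
      = B := by
    rw [hS, hθm_cos, hsqrt]
    field_simp
    linear_combination (x * (s * Real.sin θ)) * hσ2 + hxB
  have pyth : (Real.sin ψ : ℂ)^2 + (Real.cos ψ : ℂ)^2 = 1 := by
    exact_mod_cast Real.sin_sq_add_cos_sq ψ
  have e1 : Complex.exp (Complex.I * (ψ:ℂ)) = (Real.cos ψ : ℂ) + (Real.sin ψ : ℂ) * Complex.I := by
    rw [mul_comm, Complex.exp_mul_I, ← Complex.ofReal_cos, ← Complex.ofReal_sin]
  have e2 : Complex.exp (-(Complex.I * (ψ:ℂ))) = (Real.cos ψ : ℂ) - (Real.sin ψ : ℂ) * Complex.I := by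
    rw [show -(Complex.I * (ψ:ℂ)) = ((-ψ : ℝ) : ℂ) * Complex.I by push_cast; ring,
      Complex.exp_mul_I, ← Complex.ofReal_cos, ← Complex.ofReal_sin, Real.cos_neg, Real.sin_neg]
    push_cast; ring
  have hC2 : (Real.cos ((2*π + (2 * Real.arccos A - 2*π) * sgn s)/2) : ℂ)
      = (Real.cos (φ/2):ℂ)*(Real.cos ψ:ℂ) + (Real.sin (φ/2):ℂ)*(Real.sin ψ:ℂ)*(Real.cos θ:ℂ) := by
    rw [hC, hAdef, hcdef, hsdef]; push_cast; ring
  have hB2 : (Real.sin ((2*π + (2 * Real.arccos A - 2*π) * sgn s)/2) : ℂ)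
        * (Real.cos (arccot x) : ℂ)
      = -(Real.sin ψ:ℂ)*(Real.cos (φ/2):ℂ) + (Real.cos ψ:ℂ)*(Real.sin (φ/2):ℂ)*(Real.cos θ:ℂ) := by
    rw [← Complex.ofReal_mul, hSc, hBdef, hcdef, hsdef]; push_cast; ring
  have hS2 : (Real.sin ((2*π + (2 * Real.arccos A - 2*π) * sgn s)/2) : ℂ)
        * (Real.sin (arccot x) : ℂ)
      = (Real.sin (φ/2):ℂ)*(Real.sin θ:ℂ) := by
    rw [← Complex.ofReal_mul, hSs, hsdef]; push_cast; ring
  ext i j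
  fin_cases i <;> fin_cases j <;>
    simp [Rot, Matrix.mul_apply, Fin.sum_univ_two, -Complex.ofReal_cos, -Complex.ofReal_sin]
  · linear_combination (-((Real.cos ψ:ℂ) - Complex.I*(Real.sin ψ:ℂ))) * hC2
      + ((Real.cos ψ:ℂ) - Complex.I*(Real.sin ψ:ℂ))*Complex.I * hB2
      + ((Real.sin ψ:ℂ)^2*(Real.cos (φ/2):ℂ)
        - (Real.cos ψ:ℂ)*(Real.sin ψ:ℂ)*(Real.sin (φ/2):ℂ)*(Real.cos θ:ℂ)) * Complex.I_sq
      - ((Real.cos (φ/2):ℂ) - Complex.I*(Real.sin (φ/2):ℂ)*(Real.cos θ:ℂ)) * pyth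
  · linear_combination (Complex.I*(Real.sin (φ/2):ℂ)*(Real.sin θ:ℂ)) * e2
      - (((Real.cos ψ:ℂ) - Complex.I*(Real.sin ψ:ℂ))*Complex.I) * hS2
  · linear_combination (Complex.I*(Real.sin (φ/2):ℂ)*(Real.sin θ:ℂ)) * e1
      - (((Real.cos ψ:ℂ) + Complex.I*(Real.sin ψ:ℂ))*Complex.I) * hS2
  · linear_combination (-((Real.cos ψ:ℂ) + Complex.I*(Real.sin ψ:ℂ))) * hC2
      - ((Real.cos ψ:ℂ) + Complex.I*(Real.sin ψ:ℂ))*Complex.I * hB2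
      + ((Real.sin ψ:ℂ)^2*(Real.cos (φ/2):ℂ)
        - (Real.cos ψ:ℂ)*(Real.sin ψ:ℂ)*(Real.sin (φ/2):ℂ)*(Real.cos θ:ℂ)) * Complex.I_sq
      - ((Real.cos (φ/2):ℂ) + Complex.I*(Real.sin (φ/2):ℂ)*(Real.cos θ:ℂ)) * pyth
end

section
/- Fix Θ ∈ (0,π]. Let θ₁, θ₂ ∈ [0,Θ], φ₁, φ₂ ∈ (0,2π), and θ₁ ≠ θ₂, and set U = R(θ₁,0,φ₁)·R(θ₂,0,φ₂). (i) If θ₁ < θ₂ then there exist φ_z ∈ [0,4π), θ' ∈ [0,Θ] and φ' ∈ (0,2π) with U = R(0,0,φ_z)·R(θ',0,φ'). (ii) If θ₂ < θ₁ then there exist φ_m ∈ [0,4π), θ'' ∈ [0,Θ] and φ'' ∈ (0,2π) with U = R(Θ,0,φ_m)·R(θ'',0,φ''). -/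
open Real

set_option maxHeartbeats 1000000

lemma Rot_psi_zero (θ φ : ℝ) : Rot θ 0 φ =
    !![(Real.cos (φ/2) : ℂ) - Complex.I * (Real.sin (φ/2) : ℂ) * (Real.cos θ : ℂ),
       -Complex.I * (Real.sin (φ/2) : ℂ) * (Real.sin θ : ℂ);
       -Complex.I * (Real.sin (φ/2) : ℂ) * (Real.sin θ : ℂ),
       (Real.cos (φ/2) : ℂ) + Complex.I * (Real.sin (φ/2) : ℂ) * (Real.cos θ : ℂ)] := by
  simp [Rot]

lemma swap_lemma (Θ θ φ : ℝ) :
    Rot θ 0 φ * Rot (Θ/2) 0 π = Rot (Θ/2) 0 π * Rot (Θ - θ) 0 φ := by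
  have E1 : Complex.cos ((Θ:ℂ) - (θ:ℂ)) = (2*Complex.cos ((Θ:ℂ)/2)^2 - 1)*Complex.cos (θ:ℂ)
      + 2*Complex.sin ((Θ:ℂ)/2)*Complex.cos ((Θ:ℂ)/2)*Complex.sin (θ:ℂ) := by
    have h : (Θ:ℂ) - θ = 2*((Θ:ℂ)/2) - θ := by ring
    rw [h, Complex.cos_sub, Complex.cos_two_mul, Complex.sin_two_mul]
  have E2 : Complex.sin ((Θ:ℂ) - (θ:ℂ)) = 2*Complex.sin ((Θ:ℂ)/2)*Complex.cos ((Θ:ℂ)/2)*Complex.cos (θ:ℂ)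
      - (2*Complex.cos ((Θ:ℂ)/2)^2 - 1)*Complex.sin (θ:ℂ) := by
    have h : (Θ:ℂ) - θ = 2*((Θ:ℂ)/2) - θ := by ring
    rw [h, Complex.sin_sub, Complex.cos_two_mul, Complex.sin_two_mul]
  have hP : Complex.sin ((Θ:ℂ)/2)^2 + Complex.cos ((Θ:ℂ)/2)^2 = 1 :=
    Complex.sin_sq_add_cos_sq _
  have hI : Complex.I^2 = -1 := Complex.I_sq
  set s : ℂ := Complex.sin ((φ:ℂ)/2)
  set st : ℂ := Complex.sin ((Θ:ℂ)/2)
  set ct : ℂ := Complex.cos ((Θ:ℂ)/2)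
  set S : ℂ := Complex.sin (θ:ℂ)
  set Cq : ℂ := Complex.cos (θ:ℂ)
  simp only [Rot_psi_zero]
  rw [Matrix.mul_fin_two, Matrix.mul_fin_two]
  ext i j
  fin_cases i <;> fin_cases j <;>
    simp only [Fin.mk_zero, Fin.mk_one, Matrix.cons_val', Matrix.cons_val_zero,
      Matrix.cons_val_one, Matrix.head_cons, Matrix.empty_val', Matrix.cons_val_fin_one,
      Matrix.head_fin_const, Matrix.of_apply, Fin.isValue, Real.cos_pi_div_two,
      Real.sin_pi_div_two, Complex.ofReal_zero, Complex.ofReal_one] <;>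
    push_cast <;>
    rw [E1, E2]
  · linear_combination (2*s*ct*Cq - 2*s*ct^3*Cq - 2*s*st^2*ct*Cq) * hI + (2*s*ct*Cq) * hP
  · linear_combination (-2*s*ct*S + 2*s*ct^3*S + 2*s*st^2*ct*S) * hI + (-2*s*ct*S) * hP
  · linear_combination (2*s*ct*S - 2*s*ct^3*S - 2*s*st^2*ct*S) * hI + (2*s*ct*S) * hP
  · linear_combination (2*s*ct*Cq - 2*s*ct^3*Cq - 2*s*st^2*ct*Cq) * hI + (2*s*ct*Cq) * hP

lemma VV_lemma (Θ : ℝ) : Rot (Θ/2) 0 π * Rot (Θ/2) 0 π = -1 := by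
  have hP : Complex.sin ((Θ:ℂ)/2)^2 + Complex.cos ((Θ:ℂ)/2)^2 = 1 :=
    Complex.sin_sq_add_cos_sq _
  have hI : Complex.I^2 = -1 := Complex.I_sq
  set st : ℂ := Complex.sin ((Θ:ℂ)/2)
  set ct : ℂ := Complex.cos ((Θ:ℂ)/2)
  have hneg : (-1 : Matrix (Fin 2) (Fin 2) ℂ) = !![-1,0;0,-1] := by
    ext i j; fin_cases i <;> fin_cases j <;> simp
  simp only [Rot_psi_zero]
  rw [Matrix.mul_fin_two, hneg]
  ext i j
  fin_cases i <;> fin_cases j <;>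
    simp only [Fin.mk_zero, Fin.mk_one, Matrix.cons_val', Matrix.cons_val_zero,
      Matrix.cons_val_one, Matrix.head_cons, Matrix.empty_val', Matrix.cons_val_fin_one,
      Matrix.head_fin_const, Matrix.of_apply, Fin.isValue, Real.cos_pi_div_two,
      Real.sin_pi_div_two, Complex.ofReal_zero, Complex.ofReal_one] <;>
    push_cast <;>
    first
      | linear_combination (0 : ℂ) * hI
      | linear_combination (ct^2 + st^2) * hI + (-1 : ℂ) * hP
      | linear_combination (-(ct^2 + st^2)) * hI + hP

lemma aux_ineq (x y Q R T : ℝ) (hQ : 0 ≤ Q) (hR : 0 ≤ R) (hT : 0 ≤ T)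
    (hQRT : T^2 ≤ Q*R) : 0 ≤ x^2*Q + y^2*R + 2*x*y*T := by
  rcases eq_or_lt_of_le hQ with h|h
  · have hT0 : T = 0 := by nlinarith
    rw [hT0, ← h]; nlinarith [sq_nonneg y]
  · nlinarith [sq_nonneg (x*Q + y*T), mul_nonneg (sq_nonneg y) (sub_nonneg.2 hQRT)]

lemma sq_lt_one_bounds (u : ℝ) (h : u^2 < 1) : -1 < u ∧ u < 1 := by
  constructor <;> nlinarith

lemma le_of_sq_le' (u v : ℝ) (hv : 0 < v) (h : u^2 ≤ v^2) : u ≤ v := by nlinarith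

lemma neg_le_of_sq_le' (u v : ℝ) (hv : 0 < v) (h : u^2 ≤ v^2) : -v ≤ u := by nlinarith

lemma key (Θ : ℝ) (hΘ : Θ ∈ Set.Ioc 0 π)
    (θ₁ θ₂ : ℝ) (h1 : θ₁ ∈ Set.Icc 0 Θ) (h2 : θ₂ ∈ Set.Icc 0 Θ) (hlt : θ₁ < θ₂)
    (φ₁ φ₂ : ℝ) (hφ1 : φ₁ ∈ Set.Ioo 0 (2*π)) (hφ2 : φ₂ ∈ Set.Ioo 0 (2*π)) :
    ∃ φz θ' φ' : ℝ, φz ∈ Set.Ico 0 (4*π) ∧ θ' ∈ Set.Icc 0 Θ ∧ φ' ∈ Set.Ioo 0 (2*π) ∧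
      Rot θ₁ 0 φ₁ * Rot θ₂ 0 φ₂ = Rot 0 0 φz * Rot θ' 0 φ' := by
  obtain ⟨hΘ0, hΘπ⟩ := hΘ
  obtain ⟨h10, h1Θ⟩ := h1
  obtain ⟨h20, h2Θ⟩ := h2
  obtain ⟨hφ10, hφ12⟩ := hφ1
  obtain ⟨hφ20, hφ22⟩ := hφ2
  have hπ : (0:ℝ) < π := Real.pi_pos
  have hI : Complex.I^2 = -1 := Complex.I_sq
  by_cases hsp : θ₂ - θ₁ = π
  · -- special case: θ₁ = 0, θ₂ = π
    have hθ1 : θ₁ = 0 := by linarith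
    have hθ2 : θ₂ = π := by linarith
    refine ⟨4*π - φ₂, 0, φ₁, ⟨by linarith, by linarith⟩, ⟨le_refl 0, hΘ0.le⟩,
      ⟨hφ10, hφ12⟩, ?_⟩
    subst hθ1; subst hθ2
    have hc : Real.cos ((4*π - φ₂)/2) = Real.cos (φ₂/2) := by
      rw [show (4*π - φ₂)/2 = 2*π - φ₂/2 by ring, Real.cos_sub, Real.cos_two_pi,
        Real.sin_two_pi]; ring
    have hs : Real.sin ((4*π - φ₂)/2) = -Real.sin (φ₂/2) := by
      rw [show (4*π - φ₂)/2 = 2*π - φ₂/2 by ring, Real.sin_sub, Real.cos_two_pi,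
        Real.sin_two_pi]; ring
    simp only [Rot_psi_zero]
    rw [Matrix.mul_fin_two, Matrix.mul_fin_two]
    ext i j
    fin_cases i <;> fin_cases j <;>
      simp only [Fin.mk_zero, Fin.mk_one, Matrix.cons_val', Matrix.cons_val_zero,
        Matrix.cons_val_one, Matrix.head_cons, Matrix.empty_val', Matrix.cons_val_fin_one,
        Matrix.head_fin_const, Matrix.of_apply, Fin.isValue, Real.cos_pi, Real.sin_pi,
        Real.cos_zero, Real.sin_zero, hc, hs] <;>
      push_cast <;>
      ring
  · -- main case
    set c1 := Real.cos (φ₁/2) with hc1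
    set s1 := Real.sin (φ₁/2) with hs1
    set c2 := Real.cos (φ₂/2) with hc2
    set s2 := Real.sin (φ₂/2) with hs2
    set Su := Real.sin θ₁ with hSu
    set Cu := Real.cos θ₁ with hCu
    set Sv := Real.sin θ₂ with hSv
    set Cv := Real.cos θ₂ with hCv
    have hs1p : 0 < s1 := Real.sin_pos_of_pos_of_lt_pi (by linarith) (by linarith)
    have hs2p : 0 < s2 := Real.sin_pos_of_pos_of_lt_pi (by linarith) (by linarith)
    have p1 : s1^2 + c1^2 = 1 := Real.sin_sq_add_cos_sq _
    have p2 : s2^2 + c2^2 = 1 := Real.sin_sq_add_cos_sq _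
    have pu : Su^2 + Cu^2 = 1 := Real.sin_sq_add_cos_sq _
    have pv : Sv^2 + Cv^2 = 1 := Real.sin_sq_add_cos_sq _
    clear_value c1 s1 c2 s2 Su Cu Sv Cv
    set A := c1*c2 - s1*s2*(Cu*Cv + Su*Sv) with hA
    set B := c1*s2*Cv + s1*c2*Cu with hB
    set Cc := s1*s2*(Su*Cv - Cu*Sv) with hCc
    set D := c1*s2*Sv + s1*c2*Su with hD
    have hdet : A^2 + B^2 + Cc^2 + D^2 = 1 := by
      rw [hA, hB, hCc, hD]
      linear_combination (c2^2*Cu^2 + c2^2*Su^2 + s2^2*Cu^2*Cv^2 + s2^2*Cu^2*Sv^2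
          + s2^2*Su^2*Cv^2 + s2^2*Su^2*Sv^2) * p1
        + (Cu^2*Cv^2 + Cu^2*Sv^2 + Su^2*Cv^2 + Su^2*Sv^2 + c1^2*Cv^2 + c1^2*Sv^2
          - c1^2*Cu^2*Cv^2 - c1^2*Cu^2*Sv^2 - c1^2*Su^2*Cv^2 - c1^2*Su^2*Sv^2) * p2
        + (Cv^2 + Sv^2 + c2^2 - c2^2*Cv^2 - c2^2*Sv^2 - c1^2*Cv^2 - c1^2*Sv^2
          - c1^2*c2^2 + c1^2*c2^2*Cv^2 + c1^2*c2^2*Sv^2) * pu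
        + (1 - c2^2) * pv
    clear_value A B Cc D
    have hvu : 0 < Real.sin (θ₂ - θ₁) := by
      apply Real.sin_pos_of_pos_of_lt_pi (by linarith)
      rcases lt_or_eq_of_le (show θ₂ - θ₁ ≤ π by linarith) with h|h
      · exact h
      · exact absurd h hsp
    have hsvu : Su*Cv - Cu*Sv = -Real.sin (θ₂ - θ₁) := by
      rw [Real.sin_sub, hSv, hCu, hCv, hSu]; ring
    have hCcneg : Cc < 0 := by
      have hCceq : Cc = -(s1*s2*Real.sin (θ₂-θ₁)) := by rw [hCc, hsvu]; ring
      rw [hCceq]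
      have := mul_pos (mul_pos hs1p hs2p) hvu
      linarith
    have hCc2 : 0 < Cc^2 := by rw [sq]; exact mul_pos_of_neg_of_neg hCcneg hCcneg
    have hr2pos : 0 < Cc^2 + D^2 := by linarith [sq_nonneg D]
    set r := Real.sqrt (Cc^2 + D^2) with hrdef
    have hr : 0 < r := Real.sqrt_pos.2 hr2pos
    have hr2 : r^2 = Cc^2 + D^2 := Real.sq_sqrt hr2pos.le
    clear_value r
    set x := (A*D - B*Cc)/r with hx
    set y := (A*Cc + B*D)/r with hy
    clear_value x y
    have hxy : x^2 + y^2 = A^2 + B^2 := by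
      rw [hx, hy, div_pow, div_pow, ← add_div, hr2, div_eq_iff hr2pos.ne']
      ring
    have hxyz : x^2 + y^2 + r^2 = 1 := by rw [hxy, hr2]; linarith
    have hrr2 : 0 < r^2 := pow_pos hr 2
    have hx2 : x^2 < 1 := by linarith [hxyz, hrr2, sq_nonneg y]
    have hxu : x < 1 := (sq_lt_one_bounds x hx2).2
    have hxl : -1 < x := (sq_lt_one_bounds x hx2).1
    set φ' := 2 * Real.arccos x with hφ'
    clear_value φ'
    have hφ'half : φ'/2 = Real.arccos x := by rw [hφ']; ring
    have hφ'pos : 0 < φ' := by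
      have := Real.arccos_pos.2 hxu; rw [hφ']; linarith
    have hφ'lt : φ' < 2*π := by
      have harc : Real.arccos x < π := by
        rcases lt_or_eq_of_le (Real.arccos_le_pi x) with h|h
        · exact h
        · exfalso
          have hca := Real.cos_arccos hxl.le hxu.le
          rw [h, Real.cos_pi] at hca
          linarith
      rw [hφ']; linarith
    have hcx : Real.cos (φ'/2) = x := by rw [hφ'half]; exact Real.cos_arccos hxl.le hxu.le
    set ρ := Real.sqrt (1 - x^2) with hρdef
    have hρpos : 0 < ρ := Real.sqrt_pos.2 (by linarith [hx2])
    have hρ2 : ρ^2 = 1 - x^2 := Real.sq_sqrt (by linarith [hx2])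
    clear_value ρ
    have hsx : Real.sin (φ'/2) = ρ := by rw [hφ'half, Real.sin_arccos, hρdef]
    have hρ2' : ρ^2 = y^2 + r^2 := by rw [hρ2]; linarith
    have hy2ρ2 : y^2 ≤ ρ^2 := by linarith [hρ2', hrr2]
    have hyρ1 : y/ρ ≤ 1 := by
      rw [div_le_one hρpos]; exact le_of_sq_le' y ρ hρpos hy2ρ2
    have hyρ2 : -1 ≤ y/ρ := by
      rw [le_div_iff₀ hρpos]
      have := neg_le_of_sq_le' y ρ hρpos hy2ρ2
      linarith
    set θ' := Real.arccos (y/ρ) with hθ'def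
    have hθ'cos : Real.cos θ' = y/ρ := by rw [hθ'def]; exact Real.cos_arccos hyρ2 hyρ1
    have hθ'sin : Real.sin θ' = r/ρ := by
      rw [hθ'def, Real.sin_arccos,
        show 1 - (y/ρ)^2 = (r/ρ)^2 by
          field_simp
          linear_combination hρ2'
        ]
      exact Real.sqrt_sq (by positivity)
    have hθ'0 : 0 ≤ θ' := by rw [hθ'def]; exact Real.arccos_nonneg _
    have hθ'π : θ' ≤ π := by rw [hθ'def]; exact Real.arccos_le_pi _
    clear_value θ'
    -- products
    have hyc : Real.sin (φ'/2) * Real.cos θ' = y := by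
      rw [hsx, hθ'cos]; field_simp
    have hrc : Real.sin (φ'/2) * Real.sin θ' = r := by
      rw [hsx, hθ'sin]; field_simp
    -- the inequality θ' ≤ Θ
    set PP := Real.sin (θ₂-θ₁) * Real.sin (Θ-(θ₂-θ₁)) with hPP
    set QQ := Sv * Real.sin (Θ-θ₂) with hQQ
    set RR := Su * Real.sin (Θ-θ₁) with hRR
    set TT := Su * Real.sin (Θ-θ₂) with hTT
    clear_value PP QQ RR TT
    have hsinΘ : 0 ≤ Real.sin Θ := Real.sin_nonneg_of_nonneg_of_le_pi hΘ0.le hΘπ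
    have hSu0 : 0 ≤ Su := by
      rw [hSu]; exact Real.sin_nonneg_of_nonneg_of_le_pi h10 (by linarith)
    have hSv0 : 0 ≤ Sv := by
      rw [hSv]; exact Real.sin_nonneg_of_nonneg_of_le_pi h20 (by linarith)
    have hsΘ2 : 0 ≤ Real.sin (Θ-θ₂) :=
      Real.sin_nonneg_of_nonneg_of_le_pi (by linarith) (by linarith)
    have hsΘ1 : 0 ≤ Real.sin (Θ-θ₁) :=
      Real.sin_nonneg_of_nonneg_of_le_pi (by linarith) (by linarith)
    have hsΘvu : 0 ≤ Real.sin (Θ-(θ₂-θ₁)) :=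
      Real.sin_nonneg_of_nonneg_of_le_pi (by linarith) (by linarith)
    have hPP0 : 0 ≤ PP := by rw [hPP]; exact mul_nonneg hvu.le hsΘvu
    have hQQ0 : 0 ≤ QQ := by rw [hQQ]; exact mul_nonneg hSv0 hsΘ2
    have hRR0 : 0 ≤ RR := by rw [hRR]; exact mul_nonneg hSu0 hsΘ1
    have hTT0 : 0 ≤ TT := by rw [hTT]; exact mul_nonneg hSu0 hsΘ2
    have hQRT : TT^2 ≤ QQ*RR := by
      have hid : QQ*RR - TT^2 = TT * (Real.sin Θ * Real.sin (θ₂-θ₁)) := by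
        rw [hQQ, hRR, hTT, hSv, hSu]
        simp only [Real.sin_sub]
        ring
      have h6 : 0 ≤ TT*(Real.sin Θ * Real.sin (θ₂-θ₁)) :=
        mul_nonneg hTT0 (mul_nonneg hsinΘ hvu.le)
      linarith [hid, h6]
    have hEineq : 0 ≤ Real.sin Θ * (A*Cc + B*D) - Real.cos Θ * (Cc^2 + D^2) := by
      have hEeq : Real.sin Θ * (A*Cc + B*D) - Real.cos Θ * (Cc^2 + D^2)
          = (s1*s2)^2*PP + (c1*s2)^2*QQ + (s1*c2)^2*RR + 2*(c1*s2)*(s1*c2)*TT := by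
        rw [hA, hB, hCc, hD, hPP, hQQ, hRR, hTT, hSu, hSv, hCu, hCv]
        simp only [Real.sin_sub, Real.cos_sub]
        ring
      have haux := aux_ineq (c1*s2) (s1*c2) QQ RR TT hQQ0 hRR0 hTT0 hQRT
      have h7 : 0 ≤ (s1*s2)^2*PP := mul_nonneg (sq_nonneg (s1*s2)) hPP0
      linarith [hEeq, haux, h7]
    have hθ'Θ : θ' ≤ Θ := by
      by_contra hcon
      push_neg at hcon
      have hsin1 : Real.sin (Θ - θ') < 0 :=
        Real.sin_neg_of_neg_of_neg_pi_lt (by linarith) (by linarith)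
      have h4 : 0 ≤ Real.sin Θ * y - Real.cos Θ * r := by
        have heq : Real.sin Θ * y - Real.cos Θ * r
            = (Real.sin Θ * (A*Cc + B*D) - Real.cos Θ * (Cc^2 + D^2))/r := by
          rw [hy]
          field_simp
          linear_combination (-Real.cos Θ) * hr2
        rw [heq]; exact div_nonneg hEineq hr.le
      have hsin2 : 0 ≤ Real.sin (Θ - θ') := by
        rw [Real.sin_sub, hθ'cos, hθ'sin,
          show Real.sin Θ * (y/ρ) - Real.cos Θ * (r/ρ) = (Real.sin Θ * y - Real.cos Θ * r)/ρ
            by ring]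
        exact div_nonneg h4 hρpos.le
      linarith
    -- phase φz
    set b : ℂ := (Cc:ℂ) - (D:ℂ)*Complex.I with hb
    clear_value b
    have habsb : ‖b‖ = r := by
      rw [hb, Complex.norm_def, Complex.normSq_apply]
      simp only [Complex.sub_re, Complex.ofReal_re, Complex.mul_re, Complex.I_re,
        Complex.ofReal_im, Complex.I_im, Complex.sub_im, Complex.mul_im]
      rw [hrdef]
      norm_num
      ring_nf
    set ω := Complex.I * b / (r:ℂ) with hω
    clear_value ω
    have hrcne : (r:ℂ) ≠ 0 := Complex.ofReal_ne_zero.2 hr.ne'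
    have habsω : ‖ω‖ = 1 := by
      rw [hω, norm_div, norm_mul, Complex.norm_I, habsb, Complex.norm_of_nonneg hr.le,
        one_mul, div_self hr.ne']
    set t := Complex.arg ω with htdef
    have hexp : Complex.exp ((t:ℂ) * Complex.I) = ω := by
      rw [htdef]
      have h := Complex.norm_mul_exp_arg_mul_I ω
      rwa [habsω, Complex.ofReal_one, one_mul] at h
    have ht1 : -π < t := by rw [htdef]; exact Complex.neg_pi_lt_arg ω
    have ht2 : t ≤ π := by rw [htdef]; exact Complex.arg_le_pi ω
    clear_value t
    set φz := if 0 < t then 4*π - 2*t else -2*t with hφz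
    clear_value φz
    have hφzmem : φz ∈ Set.Ico 0 (4*π) := by
      rw [hφz]; split_ifs with h <;> constructor <;> push_neg at * <;> linarith
    have hczsz : Real.cos (φz/2) = Real.cos t ∧ Real.sin (φz/2) = -Real.sin t := by
      rw [hφz]; split_ifs with h
      · constructor
        · rw [show (4*π-2*t)/2 = 2*π - t by ring, Real.cos_sub, Real.cos_two_pi,
            Real.sin_two_pi]; ring
        · rw [show (4*π-2*t)/2 = 2*π - t by ring, Real.sin_sub, Real.cos_two_pi,
            Real.sin_two_pi]; ring
      · constructor
        · rw [show (-2*t)/2 = -t by ring, Real.cos_neg]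
        · rw [show (-2*t)/2 = -t by ring, Real.sin_neg]
    have hω1 : ((Real.cos (φz/2) : ℝ) : ℂ) - Complex.I * ((Real.sin (φz/2) : ℝ) : ℂ) = ω := by
      rw [hczsz.1, hczsz.2]
      push_cast
      rw [← hexp, Complex.exp_mul_I]
      ring
    have hω2 : ((Real.cos (φz/2) : ℝ) : ℂ) + Complex.I * ((Real.sin (φz/2) : ℝ) : ℂ)
        = (starRingEnd ℂ) ω := by
      have h := congrArg (starRingEnd ℂ) hω1
      simp only [map_sub, map_mul, Complex.conj_I, Complex.conj_ofReal] at h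
      rw [← h]; ring
    have hconjω : (starRingEnd ℂ) ω = -Complex.I * ((Cc:ℂ) + (D:ℂ)*Complex.I) / (r:ℂ) := by
      rw [hω, hb, map_div₀, map_mul, map_sub, map_mul, Complex.conj_I, Complex.conj_ofReal,
        Complex.conj_ofReal, Complex.conj_ofReal]
      ring
    have hr2c : ((r:ℝ):ℂ)^2 = ((Cc:ℝ):ℂ)^2 + ((D:ℝ):ℂ)^2 := by exact_mod_cast hr2
    have e00 : ω * (((x:ℝ):ℂ) - ((y:ℝ):ℂ)*Complex.I) = ((A:ℝ):ℂ) - ((B:ℝ):ℂ)*Complex.I := by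
      rw [hω, hb, hx, hy]
      push_cast
      field_simp
      linear_combination (-((A:ℝ):ℂ)*((D:ℝ):ℂ)^2 - ((A:ℝ):ℂ)*((Cc:ℝ):ℂ)^2
        + Complex.I*((B:ℝ):ℂ)*((D:ℝ):ℂ)^2 + Complex.I*((A:ℝ):ℂ)*((Cc:ℝ):ℂ)*((D:ℝ):ℂ)) * hI
        + (-((A:ℝ):ℂ) + Complex.I*((B:ℝ):ℂ)) * hr2c
    have e01 : ω * (-((r:ℝ):ℂ)*Complex.I) = ((Cc:ℝ):ℂ) - ((D:ℝ):ℂ)*Complex.I := by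
      rw [hω, hb]
      field_simp
      linear_combination (Complex.I*((D:ℝ):ℂ) - ((Cc:ℝ):ℂ)) * hI
    have e10 : (starRingEnd ℂ) ω * (-((r:ℝ):ℂ)*Complex.I)
        = -((Cc:ℝ):ℂ) - ((D:ℝ):ℂ)*Complex.I := by
      rw [hconjω]
      field_simp
      linear_combination (((Cc:ℝ):ℂ) + Complex.I*((D:ℝ):ℂ)) * hI
    have e11 : (starRingEnd ℂ) ω * (((x:ℝ):ℂ) + ((y:ℝ):ℂ)*Complex.I)
        = ((A:ℝ):ℂ) + ((B:ℝ):ℂ)*Complex.I := by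
      rw [hconjω, hx, hy]
      push_cast
      field_simp
      linear_combination (-((A:ℝ):ℂ)*((D:ℝ):ℂ)^2 - ((A:ℝ):ℂ)*((Cc:ℝ):ℂ)^2
        - Complex.I*((B:ℝ):ℂ)*((D:ℝ):ℂ)^2 - Complex.I*((A:ℝ):ℂ)*((Cc:ℝ):ℂ)*((D:ℝ):ℂ)) * hI
        + (-((A:ℝ):ℂ) - Complex.I*((B:ℝ):ℂ)) * hr2c
    have hU00 : (((Real.cos (φ₁/2) : ℝ):ℂ) - Complex.I*((Real.sin (φ₁/2) : ℝ):ℂ)*((Real.cos θ₁ : ℝ):ℂ))*(((Real.cos (φ₂/2) : ℝ):ℂ) - Complex.I*((Real.sin (φ₂/2) : ℝ):ℂ)*((Real.cos θ₂ : ℝ):ℂ))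
        + (-Complex.I*((Real.sin (φ₁/2) : ℝ):ℂ)*((Real.sin θ₁ : ℝ):ℂ))*(-Complex.I*((Real.sin (φ₂/2) : ℝ):ℂ)*((Real.sin θ₂ : ℝ):ℂ))
        = ((A:ℝ):ℂ) - ((B:ℝ):ℂ)*Complex.I := by
      rw [hA, hB, hc1, hs1, hc2, hs2, hSu, hCu, hSv, hCv]; push_cast
      linear_combination (Complex.sin ((φ₁:ℂ)/2)*Complex.sin ((φ₂:ℂ)/2)*Complex.cos (θ₁:ℂ)*Complex.cos (θ₂:ℂ)
        + Complex.sin ((φ₁:ℂ)/2)*Complex.sin ((φ₂:ℂ)/2)*Complex.sin (θ₁:ℂ)*Complex.sin (θ₂:ℂ)) * hI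
    have hU01 : (((Real.cos (φ₁/2) : ℝ):ℂ) - Complex.I*((Real.sin (φ₁/2) : ℝ):ℂ)*((Real.cos θ₁ : ℝ):ℂ))*(-Complex.I*((Real.sin (φ₂/2) : ℝ):ℂ)*((Real.sin θ₂ : ℝ):ℂ))
        + (-Complex.I*((Real.sin (φ₁/2) : ℝ):ℂ)*((Real.sin θ₁ : ℝ):ℂ))*(((Real.cos (φ₂/2) : ℝ):ℂ) + Complex.I*((Real.sin (φ₂/2) : ℝ):ℂ)*((Real.cos θ₂ : ℝ):ℂ))
        = ((Cc:ℝ):ℂ) - ((D:ℝ):ℂ)*Complex.I := by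
      rw [hCc, hD, hc1, hs1, hc2, hs2, hSu, hCu, hSv, hCv]; push_cast
      linear_combination (Complex.sin ((φ₁:ℂ)/2)*Complex.sin ((φ₂:ℂ)/2)*Complex.cos (θ₁:ℂ)*Complex.sin (θ₂:ℂ)
        - Complex.sin ((φ₁:ℂ)/2)*Complex.sin ((φ₂:ℂ)/2)*Complex.sin (θ₁:ℂ)*Complex.cos (θ₂:ℂ)) * hI
    have hU10 : (-Complex.I*((Real.sin (φ₁/2) : ℝ):ℂ)*((Real.sin θ₁ : ℝ):ℂ))*(((Real.cos (φ₂/2) : ℝ):ℂ) - Complex.I*((Real.sin (φ₂/2) : ℝ):ℂ)*((Real.cos θ₂ : ℝ):ℂ))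
        + (((Real.cos (φ₁/2) : ℝ):ℂ) + Complex.I*((Real.sin (φ₁/2) : ℝ):ℂ)*((Real.cos θ₁ : ℝ):ℂ))*(-Complex.I*((Real.sin (φ₂/2) : ℝ):ℂ)*((Real.sin θ₂ : ℝ):ℂ))
        = -((Cc:ℝ):ℂ) - ((D:ℝ):ℂ)*Complex.I := by
      rw [hCc, hD, hc1, hs1, hc2, hs2, hSu, hCu, hSv, hCv]; push_cast
      linear_combination (-Complex.sin ((φ₁:ℂ)/2)*Complex.sin ((φ₂:ℂ)/2)*Complex.cos (θ₁:ℂ)*Complex.sin (θ₂:ℂ)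
        + Complex.sin ((φ₁:ℂ)/2)*Complex.sin ((φ₂:ℂ)/2)*Complex.sin (θ₁:ℂ)*Complex.cos (θ₂:ℂ)) * hI
    have hU11 : (-Complex.I*((Real.sin (φ₁/2) : ℝ):ℂ)*((Real.sin θ₁ : ℝ):ℂ))*(-Complex.I*((Real.sin (φ₂/2) : ℝ):ℂ)*((Real.sin θ₂ : ℝ):ℂ))
        + (((Real.cos (φ₁/2) : ℝ):ℂ) + Complex.I*((Real.sin (φ₁/2) : ℝ):ℂ)*((Real.cos θ₁ : ℝ):ℂ))*(((Real.cos (φ₂/2) : ℝ):ℂ) + Complex.I*((Real.sin (φ₂/2) : ℝ):ℂ)*((Real.cos θ₂ : ℝ):ℂ))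
        = ((A:ℝ):ℂ) + ((B:ℝ):ℂ)*Complex.I := by
      rw [hA, hB, hc1, hs1, hc2, hs2, hSu, hCu, hSv, hCv]; push_cast
      linear_combination (Complex.sin ((φ₁:ℂ)/2)*Complex.sin ((φ₂:ℂ)/2)*Complex.cos (θ₁:ℂ)*Complex.cos (θ₂:ℂ)
        + Complex.sin ((φ₁:ℂ)/2)*Complex.sin ((φ₂:ℂ)/2)*Complex.sin (θ₁:ℂ)*Complex.sin (θ₂:ℂ)) * hI
    refine ⟨φz, θ', φ', hφzmem, ⟨hθ'0, hθ'Θ⟩, ⟨hφ'pos, hφ'lt⟩, ?_⟩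
    have hycc : ((Real.sin (φ'/2) : ℝ):ℂ) * ((Real.cos θ' : ℝ):ℂ) = ((y:ℝ):ℂ) := by
      exact_mod_cast hyc
    have hrcc : ((Real.sin (φ'/2) : ℝ):ℂ) * ((Real.sin θ' : ℝ):ℂ) = ((r:ℝ):ℂ) := by
      exact_mod_cast hrc
    have hcxc : ((Real.cos (φ'/2) : ℝ):ℂ) = ((x:ℝ):ℂ) := by exact_mod_cast hcx
    simp only [Rot_psi_zero]
    rw [Matrix.mul_fin_two, Matrix.mul_fin_two]
    ext i j
    fin_cases i <;> fin_cases j <;>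
      simp only [Fin.mk_zero, Fin.mk_one, Matrix.cons_val', Matrix.cons_val_zero,
        Matrix.cons_val_one, Matrix.head_cons, Matrix.empty_val', Matrix.cons_val_fin_one,
        Matrix.head_fin_const, Matrix.of_apply, Fin.isValue, Real.cos_zero, Real.sin_zero,
        Complex.ofReal_zero, Complex.ofReal_one, mul_zero, zero_mul, mul_one, sub_zero,
        add_zero, neg_zero, zero_add]
    · linear_combination hU00 - e00
        - (((Real.cos (φ'/2) : ℝ):ℂ) - Complex.I*((Real.sin (φ'/2) : ℝ):ℂ)*((Real.cos θ' : ℝ):ℂ)) * hω1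
        - ω * hcxc + ω*Complex.I*hycc
    · linear_combination hU01 - e01
        - (-Complex.I*((Real.sin (φ'/2) : ℝ):ℂ)*((Real.sin θ' : ℝ):ℂ)) * hω1
        + ω*Complex.I*hrcc
    · linear_combination hU10 - e10
        - (-Complex.I*((Real.sin (φ'/2) : ℝ):ℂ)*((Real.sin θ' : ℝ):ℂ)) * hω2
        + (starRingEnd ℂ) ω*Complex.I*hrcc
    · linear_combination hU11 - e11
        - (((Real.cos (φ'/2) : ℝ):ℂ) + Complex.I*((Real.sin (φ'/2) : ℝ):ℂ)*((Real.cos θ' : ℝ):ℂ)) * hω2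
        - (starRingEnd ℂ) ω * hcxc - (starRingEnd ℂ) ω*Complex.I*hycc

theorem stmt3 (Θ : ℝ) (hΘ : Θ ∈ Set.Ioc 0 π)
    (θ₁ θ₂ : ℝ) (h1 : θ₁ ∈ Set.Icc 0 Θ) (h2 : θ₂ ∈ Set.Icc 0 Θ) (hne : θ₁ ≠ θ₂)
    (φ₁ φ₂ : ℝ) (hφ1 : φ₁ ∈ Set.Ioo 0 (2*π)) (hφ2 : φ₂ ∈ Set.Ioo 0 (2*π)) :
    (θ₁ < θ₂ →
      ∃ φz θ' φ' : ℝ, φz ∈ Set.Ico 0 (4*π) ∧ θ' ∈ Set.Icc 0 Θ ∧ φ' ∈ Set.Ioo 0 (2*π) ∧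
        Rot θ₁ 0 φ₁ * Rot θ₂ 0 φ₂ = Rot 0 0 φz * Rot θ' 0 φ') ∧
    (θ₂ < θ₁ →
      ∃ φm θ'' φ'' : ℝ, φm ∈ Set.Ico 0 (4*π) ∧ θ'' ∈ Set.Icc 0 Θ ∧ φ'' ∈ Set.Ioo 0 (2*π) ∧
        Rot θ₁ 0 φ₁ * Rot θ₂ 0 φ₂ = Rot Θ 0 φm * Rot θ'' 0 φ'') := by
  constructor
  · intro hlt
    exact key Θ hΘ θ₁ θ₂ h1 h2 hlt φ₁ φ₂ hφ1 hφ2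
  · intro hlt
    obtain ⟨hΘ0, hΘπ⟩ := hΘ
    obtain ⟨φz, θ', φ', hm, ht, hp, heq⟩ :=
      key Θ ⟨hΘ0, hΘπ⟩ (Θ-θ₁) (Θ-θ₂)
        ⟨by linarith [h1.2], by linarith [h1.1]⟩
        ⟨by linarith [h2.2], by linarith [h2.1]⟩
        (by linarith) φ₁ φ₂ hφ1 hφ2
    refine ⟨φz, Θ-θ', φ', hm, ⟨by linarith [ht.2], by linarith [ht.1]⟩, hp, ?_⟩
    set V := Rot (Θ/2) 0 π with hV
    have sw : ∀ θ φ : ℝ, Rot θ 0 φ * V = V * Rot (Θ-θ) 0 φ := fun θ φ => swap_lemma Θ θ φ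
    have hVV : V * V = -1 := VV_lemma Θ
    have sw2 : Rot (Θ-θ₂) 0 φ₂ * V = V * Rot θ₂ 0 φ₂ := by
      have h := sw (Θ-θ₂) φ₂
      rwa [show Θ-(Θ-θ₂) = θ₂ by ring] at h
    have sw3 : Rot Θ 0 φz * V = V * Rot 0 0 φz := by
      have h := sw Θ φz
      rwa [show Θ-Θ = (0:ℝ) by ring] at h
    have h6 : V * (Rot (Θ-θ₁) 0 φ₁ * Rot (Θ-θ₂) 0 φ₂) * V
        = -(Rot θ₁ 0 φ₁ * Rot θ₂ 0 φ₂) := by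
      calc V * (Rot (Θ-θ₁) 0 φ₁ * Rot (Θ-θ₂) 0 φ₂) * V
          = (V * Rot (Θ-θ₁) 0 φ₁) * (Rot (Θ-θ₂) 0 φ₂ * V) := by noncomm_ring
        _ = (Rot θ₁ 0 φ₁ * V) * (V * Rot θ₂ 0 φ₂) := by rw [← sw θ₁ φ₁, sw2]
        _ = Rot θ₁ 0 φ₁ * (V * V) * Rot θ₂ 0 φ₂ := by noncomm_ring
        _ = -(Rot θ₁ 0 φ₁ * Rot θ₂ 0 φ₂) := by rw [hVV]; noncomm_ring
    have h7 : V * (Rot 0 0 φz * Rot θ' 0 φ') * V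
        = -(Rot Θ 0 φz * Rot (Θ-θ') 0 φ') := by
      calc V * (Rot 0 0 φz * Rot θ' 0 φ') * V
          = (V * Rot 0 0 φz) * (Rot θ' 0 φ' * V) := by noncomm_ring
        _ = (Rot Θ 0 φz * V) * (V * Rot (Θ-θ') 0 φ') := by rw [← sw3, sw θ' φ']
        _ = Rot Θ 0 φz * (V * V) * Rot (Θ-θ') 0 φ' := by noncomm_ring
        _ = -(Rot Θ 0 φz * Rot (Θ-θ') 0 φ') := by rw [hVV]; noncomm_ring
    have h9 : -(Rot θ₁ 0 φ₁ * Rot θ₂ 0 φ₂) = -(Rot Θ 0 φz * Rot (Θ-θ') 0 φ') := by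
      rw [← h6, ← h7, heq]
    exact neg_inj.mp h9
end

section
/- Fix Θ ∈ (0,π]. Then 𝒢_ξ·𝒢_ξ = 𝒢_b·𝒢_ξ = 𝒢_ξ·𝒢_b, where the product of two sets of matrices 𝒢₁, 𝒢₂ is {A·B : A ∈ 𝒢₁, B ∈ 𝒢₂}. -/
open Real

/-- Product of two sets of matrices. -/
def setMul (G₁ G₂ : Set (Matrix (Fin 2) (Fin 2) ℂ)) : Set (Matrix (Fin 2) (Fin 2) ℂ) :=
  {C | ∃ A ∈ G₁, ∃ B ∈ G₂, C = A * B}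

/-- Rotations with axis in the x-z plane making angle at most Θ with ẑ. -/
noncomputable def Gxi (Θ : ℝ) : Set (Matrix (Fin 2) (Fin 2) ℂ) :=
  {M | ∃ θ φ : ℝ, θ ∈ Set.Icc 0 Θ ∧ φ ∈ Set.Ico 0 (4*π) ∧ M = Rot θ 0 φ}

/-- Rotations about the axis ẑ. -/
noncomputable def Gz : Set (Matrix (Fin 2) (Fin 2) ℂ) :=
  {M | ∃ φ : ℝ, φ ∈ Set.Ico 0 (4*π) ∧ M = Rot 0 0 φ}

/-- Rotations about the axis m̂ = (sin Θ, 0, cos Θ). -/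
noncomputable def Gm (Θ : ℝ) : Set (Matrix (Fin 2) (Fin 2) ℂ) :=
  {M | ∃ φ : ℝ, φ ∈ Set.Ico 0 (4*π) ∧ M = Rot Θ 0 φ}

/-- The boundary rotations. -/
noncomputable def Gb (Θ : ℝ) : Set (Matrix (Fin 2) (Fin 2) ℂ) := Gz ∪ Gm Θ

noncomputable def q2m (w x y z : ℝ) : Matrix (Fin 2) (Fin 2) ℂ :=
  !![(w : ℂ) - Complex.I * z, -Complex.I * x - y;
     -Complex.I * x + y, (w : ℂ) + Complex.I * z]

lemma q2m_mul (w1 x1 y1 z1 w2 x2 y2 z2 : ℝ) :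
    q2m w1 x1 y1 z1 * q2m w2 x2 y2 z2 =
    q2m (w1*w2 - x1*x2 - y1*y2 - z1*z2) (w1*x2 + x1*w2 + y1*z2 - z1*y2)
        (w1*y2 + y1*w2 + z1*x2 - x1*z2) (w1*z2 + z1*w2 + x1*y2 - y1*x2) := by
  ext i j
  fin_cases i <;> fin_cases j <;>
    simp [q2m, Matrix.mul_apply, Fin.sum_univ_two] <;> push_cast <;> ring_nf <;>
    simp [Complex.ext_iff] <;> ring

lemma Rot_eq (θ φ : ℝ) :
    Rot θ 0 φ = q2m (Real.cos (φ/2)) (Real.sin (φ/2) * Real.sin θ) 0 (Real.sin (φ/2) * Real.cos θ) := by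
  ext i j
  fin_cases i <;> fin_cases j <;>
    simp [Rot, q2m] <;> push_cast <;> ring

lemma exists_cos_sin (w s : ℝ) (h : w^2 + s^2 = 1) : ∃ θ : ℝ, Real.cos θ = w ∧ Real.sin θ = s := by
  have hw1 : -1 ≤ w := by nlinarith
  have hw2 : w ≤ 1 := by nlinarith
  rcases le_or_gt 0 s with hs | hs
  · refine ⟨Real.arccos w, Real.cos_arccos hw1 hw2, ?_⟩
    rw [Real.sin_arccos]
    have : (1 : ℝ) - w^2 = s^2 := by linarith
    rw [this, Real.sqrt_sq hs]
  · refine ⟨-Real.arccos w, by rw [Real.cos_neg]; exact Real.cos_arccos hw1 hw2, ?_⟩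
    rw [Real.sin_neg, Real.sin_arccos]
    have : (1 : ℝ) - w^2 = s^2 := by linarith
    rw [this, Real.sqrt_sq_eq_abs, abs_of_neg hs]; ring

lemma exists_phi (w s : ℝ) (h : w^2 + s^2 = 1) :
    ∃ φ : ℝ, 0 ≤ φ ∧ φ < 4*π ∧ Real.cos (φ/2) = w ∧ Real.sin (φ/2) = s := by
  have hw1 : -1 ≤ w := by nlinarith
  have hw2 : w ≤ 1 := by nlinarith
  have hpi := Real.pi_pos
  rcases le_or_gt 0 s with hs | hs
  · refine ⟨2 * Real.arccos w, by nlinarith [Real.arccos_nonneg w], ?_, ?_, ?_⟩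
    · have := Real.arccos_le_pi w; linarith
    · have : 2 * Real.arccos w / 2 = Real.arccos w := by ring
      rw [this]; exact Real.cos_arccos hw1 hw2
    · have : 2 * Real.arccos w / 2 = Real.arccos w := by ring
      rw [this, Real.sin_arccos]
      have h2 : (1 : ℝ) - w^2 = s^2 := by linarith
      rw [h2, Real.sqrt_sq hs]
  · have hane : Real.arccos w ≠ 0 := by
      intro h0
      have : w = 1 := by
        have := Real.cos_arccos hw1 hw2; rw [h0] at this; simpa using this.symm
      nlinarith
    have hapos : 0 < Real.arccos w := lt_of_le_of_ne (Real.arccos_nonneg w) (Ne.symm hane)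
    refine ⟨4*π - 2*Real.arccos w, ?_, by linarith, ?_, ?_⟩
    · have := Real.arccos_le_pi w; linarith
    · have he : (4*π - 2*Real.arccos w)/2 = 2*π - Real.arccos w := by ring
      rw [he, Real.cos_sub, Real.cos_two_pi, Real.sin_two_pi]
      simpa using Real.cos_arccos hw1 hw2
    · have he : (4*π - 2*Real.arccos w)/2 = 2*π - Real.arccos w := by ring
      rw [he, Real.sin_sub, Real.cos_two_pi, Real.sin_two_pi, Real.sin_arccos]
      have h2 : (1 : ℝ) - w^2 = s^2 := by linarith
      rw [h2, Real.sqrt_sq_eq_abs, abs_of_neg hs]; ring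

lemma rep_of_pos (Θ : ℝ) (hΘ1 : 0 < Θ) (hΘ2 : Θ ≤ π) (x z : ℝ) (hx : 0 < x)
    (hgg : Real.cos Θ * x ≤ Real.sin Θ * z) :
    ∃ θ : ℝ, 0 ≤ θ ∧ θ ≤ Θ ∧ x = Real.sqrt (x^2+z^2) * Real.sin θ ∧
      z = Real.sqrt (x^2+z^2) * Real.cos θ ∧
      (Real.cos Θ * x = Real.sin Θ * z → θ = Θ) := by
  set r := Real.sqrt (x^2+z^2) with hr
  have hrpos : 0 < r := Real.sqrt_pos.2 (by positivity)
  have hr2 : r^2 = x^2 + z^2 := Real.sq_sqrt (by positivity)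
  have hz1 : -1 ≤ z/r := by rw [le_div_iff₀ hrpos]; nlinarith
  have hz2 : z/r ≤ 1 := by rw [div_le_iff₀ hrpos]; nlinarith
  set θ := Real.arccos (z/r) with hθ
  have hθ0 : 0 ≤ θ := Real.arccos_nonneg _
  have hθpi : θ ≤ π := Real.arccos_le_pi _
  have hcos : Real.cos θ = z/r := Real.cos_arccos hz1 hz2
  have hsin : Real.sin θ = x/r := by
    rw [hθ, Real.sin_arccos]
    have h1 : 1 - (z/r)^2 = (x/r)^2 := by field_simp; nlinarith
    rw [h1, Real.sqrt_sq (by positivity)]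
  have hxe : x = r * Real.sin θ := by rw [hsin]; field_simp
  have hze : z = r * Real.cos θ := by rw [hcos]; field_simp
  have hθΘ : θ ≤ Θ := by
    by_contra hlt
    push_neg at hlt
    have hs : Real.sin (Θ - θ) < 0 :=
      Real.sin_neg_of_neg_of_neg_pi_lt (by linarith) (by linarith)
    rw [Real.sin_sub, hcos, hsin] at hs
    have hs' : (Real.sin Θ * z - Real.cos Θ * x)/r < 0 := by
      have : Real.sin Θ * (z/r) - Real.cos Θ * (x/r) = (Real.sin Θ * z - Real.cos Θ * x)/r := by
        field_simp
      linarith [this ▸ hs]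
    have hlt0 : Real.sin Θ * z - Real.cos Θ * x < 0 := by
      have := (div_lt_iff₀ hrpos).1 (by linarith : (Real.sin Θ * z - Real.cos Θ * x)/r < 0)
      linarith [this]
    linarith
  refine ⟨θ, hθ0, hθΘ, hxe, hze, ?_⟩
  intro heq
  have hsz : Real.sin (Θ - θ) = 0 := by
    rw [Real.sin_sub, hcos, hsin]
    field_simp
    linarith
  have hθpos : 0 < θ := by
    rcases lt_or_eq_of_le hθ0 with h | h
    · exact h
    · exfalso; rw [← h] at hsin; simp at hsin
      have : x = 0 := by
        field_simp at hsin; linarith [hsin]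
      linarith
  -- Θ - θ ∈ [0, π), sin = 0 ⟹ Θ = θ
  by_contra hne
  have hlt : 0 < Θ - θ := lt_of_le_of_ne (by linarith) (by intro h; exact hne (by linarith))
  have : 0 < Real.sin (Θ - θ) := Real.sin_pos_of_pos_of_lt_pi hlt (by linarith)
  linarith

lemma exists_theta (Θ : ℝ) (hΘ1 : 0 < Θ) (hΘ2 : Θ ≤ π) (x z : ℝ)
    (hg : Real.cos Θ * x^2 - Real.sin Θ * (x*z) ≤ 0) :
    ∃ θ s : ℝ, 0 ≤ θ ∧ θ ≤ Θ ∧ x = s * Real.sin θ ∧ z = s * Real.cos θ ∧ s^2 = x^2 + z^2 ∧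
      (Real.cos Θ * x^2 - Real.sin Θ * (x*z) = 0 → x = 0 ∨ θ = Θ) := by
  rcases lt_trichotomy x 0 with hx | hx | hx
  · have h1 : Real.cos Θ * (-x) ≤ Real.sin Θ * (-z) := by nlinarith
    obtain ⟨θ, h0, hΘ', hxe, hze, hbd⟩ := rep_of_pos Θ hΘ1 hΘ2 (-x) (-z) (by linarith) h1
    refine ⟨θ, -Real.sqrt ((-x)^2+(-z)^2), h0, hΘ', by linarith [hxe], by linarith [hze], ?_, ?_⟩
    · have : Real.sqrt ((-x)^2+(-z)^2)^2 = (-x)^2+(-z)^2 := Real.sq_sqrt (by positivity)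
      nlinarith [this]
    · intro heq
      right; apply hbd; nlinarith
  · exact ⟨0, z, le_refl 0, le_of_lt hΘ1, by simp [hx], by simp, by simp [hx], fun _ => Or.inl hx⟩
  · have h1 : Real.cos Θ * x ≤ Real.sin Θ * z := by nlinarith
    obtain ⟨θ, h0, hΘ', hxe, hze, hbd⟩ := rep_of_pos Θ hΘ1 hΘ2 x z hx h1
    refine ⟨θ, Real.sqrt (x^2+z^2), h0, hΘ', hxe, hze, Real.sq_sqrt (by positivity), ?_⟩
    intro heq
    right; apply hbd; nlinarith

-- the core circle lemma
lemma lemS (m d s0 : ℝ) (hm1 : -1 ≤ m) (hm2 : m ≤ 1)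
    (h1 : Real.cos s0 ≤ m) (h2 : Real.cos (s0 - d) ≤ m) :
    Real.cos (Real.arccos m - d) ≤ m ∨ Real.cos (Real.arccos m + d) ≤ m := by
  by_contra hcon
  push_neg at hcon
  obtain ⟨hA, hB⟩ := hcon
  set z := Real.arccos m with hz
  clear_value z
  have hcz : Real.cos z = m := by rw [hz]; exact Real.cos_arccos hm1 hm2
  have hsz : Real.sin z = Real.sqrt (1 - m^2) := by rw [hz]; exact Real.sin_arccos m
  have hsz0 : 0 ≤ Real.sin z := by rw [hsz]; positivity
  have hsz2 : Real.sin z ^ 2 = 1 - m^2 := by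
    rw [hsz, Real.sq_sqrt]; nlinarith
  rw [Real.cos_sub, hcz] at hA
  rw [Real.cos_add, hcz] at hB
  -- hA : m * cos d + sin z * sin d > m ; hB : m * cos d - sin z * sin d > m
  have hcd1 : Real.cos d ≤ 1 := Real.cos_le_one d
  have hmneg : m < 0 ∧ Real.cos d < 1 := by
    constructor
    · by_contra hm0
      push_neg at hm0
      nlinarith
    · by_contra hc1
      push_neg at hc1
      have : Real.cos d = 1 := le_antisymm hcd1 hc1
      rw [this] at hA hB
      nlinarith
  obtain ⟨hmneg', hcd1'⟩ := hmneg
  -- m(1 - cos d) < ± sin z sin d , so squares : m^2 (1-cos d)^2 > sin z^2 sin d^2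
  have hsq : m^2 * (1 - Real.cos d)^2 > Real.sin z ^2 * Real.sin d ^2 := by
    have e1 : m * (1 - Real.cos d) < Real.sin z * Real.sin d := by nlinarith
    have e2 : m * (1 - Real.cos d) < -(Real.sin z * Real.sin d) := by nlinarith
    nlinarith [e1, e2]
  have hsind : Real.sin d ^ 2 = 1 - Real.cos d ^2 := by
    have := Real.sin_sq_add_cos_sq d; linarith
  rw [hsz2, hsind] at hsq
  -- deduce cos d < 2 m^2 - 1
  have hkey : Real.cos d < 2*m^2 - 1 := by nlinarith [hsq, hcd1']
  -- but cos d >= 2m^2 - 1 from h1 h2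
  set a := Real.cos s0 with ha
  clear_value a
  set b := Real.cos (s0 - d) with hb
  clear_value b
  have ha1 : -1 ≤ a := by rw [ha]; exact Real.neg_one_le_cos s0
  have hb1 : -1 ≤ b := by rw [hb]; exact Real.neg_one_le_cos (s0 - d)
  have hcosd : Real.cos d = a * b + Real.sin s0 * Real.sin (s0 - d) := by
    have hd := Real.cos_sub s0 (s0 - d)
    have he : s0 - (s0 - d) = d := by ring
    rw [he] at hd
    rw [hd, ha, hb]
  have hs2a : Real.sin s0 ^2 = 1 - a^2 := by
    have := Real.sin_sq_add_cos_sq s0; rw [ha]; linarith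
  have hs2b : Real.sin (s0 - d) ^2 = 1 - b^2 := by
    have := Real.sin_sq_add_cos_sq (s0 - d); rw [hb]; linarith
  have habm : a*b - (2*m^2 - 1) ≥ 0 := by nlinarith
  have hsqle : (1 - a^2)*(1 - b^2) ≤ (a*b - (2*m^2-1))^2 := by
    have t1 : (0:ℝ) ≤ (a-b)^2 := sq_nonneg _
    have t2 : (0:ℝ) ≤ 1 - m^2 := by nlinarith
    have t3 : (0:ℝ) ≤ (m-a)*(m-b) := mul_nonneg (by linarith) (by linarith)
    have t4 : (0:ℝ) ≤ (-m) * ((m-a)+(m-b)) := mul_nonneg (by linarith) (by linarith)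
    have key : (a*b - (2*m^2-1))^2 - (1 - a^2)*(1 - b^2)
        = (a-b)^2 + 4*((1-m^2)*((m-a)*(m-b))) + 4*((1-m^2)*((-m)*((m-a)+(m-b)))) := by ring
    linarith [t1, key, mul_nonneg t2 t3, mul_nonneg t2 t4]
  have hss : Real.sin s0 * Real.sin (s0 - d) ≥ -(a*b - (2*m^2-1)) := by
    have h5 : (Real.sin s0 * Real.sin (s0 - d))^2 = (1-a^2)*(1-b^2) := by
      rw [mul_pow, hs2a, hs2b]
    have h6 : |Real.sin s0 * Real.sin (s0 - d)| ≤ a*b - (2*m^2-1) := by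
      rw [← Real.sqrt_sq_eq_abs, h5]
      calc Real.sqrt ((1-a^2)*(1-b^2)) ≤ Real.sqrt ((a*b - (2*m^2-1))^2) :=
            Real.sqrt_le_sqrt hsqle
        _ = a*b - (2*m^2-1) := by rw [Real.sqrt_sq habm]
    linarith [neg_abs_le (Real.sin s0 * Real.sin (s0 - d)), abs_le.1 h6]
  linarith [hss, hcosd, hkey]

lemma polar_decomp (x y : ℝ) : ∃ R δ : ℝ, 0 ≤ R ∧ x = R * Real.cos δ ∧ y = R * Real.sin δ ∧
    R^2 = x^2 + y^2 := by
  rcases eq_or_lt_of_le (by positivity : (0:ℝ) ≤ x^2 + y^2) with h | h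
  · have hx : x = 0 := by nlinarith
    have hy : y = 0 := by nlinarith
    exact ⟨0, 0, le_refl 0, by simp [hx], by simp [hy], by simp [hx, hy]⟩
  · set R := Real.sqrt (x^2+y^2) with hR
    have hRpos : 0 < R := Real.sqrt_pos.2 h
    have hR2 : R^2 = x^2+y^2 := Real.sq_sqrt (le_of_lt h)
    obtain ⟨δ, hc, hs⟩ := exists_cos_sin (x/R) (y/R) (by field_simp; linarith)
    exact ⟨R, δ, le_of_lt hRpos, by rw [hc]; field_simp, by rw [hs]; field_simp, hR2⟩


lemma sinmain (α β γ α' β' γ' : ℝ)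
    (hsum : α + γ = α' + γ')
    (hdet : α*γ - β^2 = α'*γ' - β'^2)
    (hα : α ≤ 0) (hα' : α' ≤ 0)
    (hz : ∃ x : ℝ, α*(Real.cos x)^2 + 2*β*(Real.cos x*Real.sin x) + γ*(Real.sin x)^2 = 0) :
    ∃ x : ℝ, α*(Real.cos x)^2 + 2*β*(Real.cos x*Real.sin x) + γ*(Real.sin x)^2 = 0 ∧
      α'*(Real.cos x)^2 + 2*β'*(Real.cos x*Real.sin x) + γ'*(Real.sin x)^2 ≤ 0 := by
  obtain ⟨R, δ, hR0, hRc, hRs, hR2⟩ := polar_decomp ((α - γ)/2) β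
  obtain ⟨R', δ', hR0', hRc', hRs', hR2'⟩ := polar_decomp ((α' - γ')/2) β'
  obtain ⟨c, hc⟩ : ∃ c : ℝ, c = (α + γ)/2 := ⟨_, rfl⟩
  have hRR : R' = R := by
    have hsq : R'^2 = R^2 := by
      rw [hR2, hR2']
      linear_combination (-(α+γ+α'+γ')/4) * hsum + hdet
    have h0 : (R' - R)*(R' + R) = 0 := by nlinarith
    rcases mul_eq_zero.1 h0 with h | h
    · linarith
    · linarith
  have hF : ∀ x : ℝ, α*(Real.cos x)^2 + 2*β*(Real.cos x*Real.sin x) + γ*(Real.sin x)^2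
      = c + R * Real.cos (2*x - δ) := by
    intro x
    rw [Real.cos_sub, Real.cos_two_mul, Real.sin_two_mul]
    have hp := Real.sin_sq_add_cos_sq x
    linear_combination γ * hp + (2*(Real.cos x)^2 - 1) * hRc + (2*Real.sin x*Real.cos x) * hRs - hc
  have hG : ∀ x : ℝ, α'*(Real.cos x)^2 + 2*β'*(Real.cos x*Real.sin x) + γ'*(Real.sin x)^2
      = c + R * Real.cos (2*x - δ') := by
    intro x
    rw [Real.cos_sub, Real.cos_two_mul, Real.sin_two_mul, ← hRR]
    have hp := Real.sin_sq_add_cos_sq x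
    linear_combination γ' * hp + (2*(Real.cos x)^2 - 1) * hRc' + (2*Real.sin x*Real.cos x) * hRs'
      - hsum/2 - hc
  obtain ⟨x0, hx0⟩ := hz
  rw [hF x0] at hx0
  have hcleR : c ≤ R ∧ -c ≤ R := by
    have h1 := Real.neg_one_le_cos (2*x0 - δ)
    have h2 := Real.cos_le_one (2*x0 - δ)
    constructor <;> nlinarith
  rcases eq_or_lt_of_le hR0 with hReq | hRpos
  · -- R = 0, c = 0, everything vanishes
    have hc0 : c = 0 := by
      have h1 := hcleR.1; have h2 := hcleR.2
      have : R = 0 := hReq.symm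
      linarith
    refine ⟨x0, ?_, ?_⟩
    · rw [hF x0, hc0, ← hReq]; ring
    · rw [hG x0, hc0, ← hReq]
      have : (0:ℝ) + 0 * Real.cos (2*x0 - δ') = 0 := by ring
      linarith [this]
  · obtain ⟨m, hm⟩ : ∃ m : ℝ, m = -c/R := ⟨_, rfl⟩
    have hmR : R * m = -c := by rw [hm]; field_simp
    have hm1 : -1 ≤ m := by rw [hm, le_div_iff₀ hRpos]; linarith [hcleR.1]
    have hm2 : m ≤ 1 := by rw [hm, div_le_iff₀ hRpos]; linarith [hcleR.2]
    have hcz : Real.cos (Real.arccos m) = m := Real.cos_arccos hm1 hm2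
    have hFα : c + R * Real.cos δ = α := by
      have := hF 0
      simp at this
      linarith
    have hGα : c + R * Real.cos δ' = α' := by
      have := hG 0
      simp at this
      linarith
    have h1 : Real.cos (-δ) ≤ m := by
      rw [Real.cos_neg, hm, le_div_iff₀ hRpos]
      linarith [hFα, hα]
    have h2 : Real.cos (-δ - (δ' - δ)) ≤ m := by
      have he : -δ - (δ' - δ) = -δ' := by ring
      rw [he, Real.cos_neg, hm, le_div_iff₀ hRpos]
      linarith [hGα, hα']
    rcases lemS m (δ' - δ) (-δ) hm1 hm2 h1 h2 with hc1 | hc1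
    · refine ⟨(Real.arccos m - (δ' - δ) + δ')/2, ?_, ?_⟩
      · rw [hF]
        have he : 2*((Real.arccos m - (δ' - δ) + δ')/2) - δ = Real.arccos m := by ring
        rw [he, hcz]
        linarith [hmR]
      · rw [hG]
        have he : 2*((Real.arccos m - (δ' - δ) + δ')/2) - δ' = Real.arccos m - (δ' - δ) := by ring
        rw [he]
        have hmul := mul_le_mul_of_nonneg_left hc1 (le_of_lt hRpos)
        linarith [hmR, hmul]
    · refine ⟨(-(Real.arccos m) - (δ' - δ) + δ')/2, ?_, ?_⟩
      · rw [hF]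
        have he : 2*((-(Real.arccos m) - (δ' - δ) + δ')/2) - δ = -(Real.arccos m) := by ring
        rw [he, Real.cos_neg, hcz]
        linarith [hmR]
      · rw [hG]
        have he : 2*((-(Real.arccos m) - (δ' - δ) + δ')/2) - δ' = -(Real.arccos m + (δ' - δ)) := by
          ring
        rw [he, Real.cos_neg, Real.cos_add]
        have he2 : Real.cos (Real.arccos m + (δ' - δ)) ≤ m := hc1
        rw [Real.cos_add] at he2
        have hmul := mul_le_mul_of_nonneg_left he2 (le_of_lt hRpos)
        linarith [hmR, hmul]

lemma build (a0 u0 v0 a2 u2 v2 W X Y Z ct st : ℝ)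
    (hpy : ct^2 + st^2 = 1)
    (h1 : a0^2+u0^2+v0^2 = 1) (hu2 : a2^2+u2^2+v2^2 = 1) (horth : a0*a2+u0*u2+v0*v2 = 0)
    (hL : a0*Y+u0*Z-v0*X = 0) (hLe2 : a2*Y+u2*Z-v2*X = 0) (hNq : W^2+X^2+Y^2+Z^2 = 1) :
    (ct*a0+st*a2)^2+(ct*u0+st*u2)^2+(ct*v0+st*v2)^2 = 1 ∧
    ((ct*a0+st*a2)*W + (ct*u0+st*u2)*X + (ct*v0+st*v2)*Z)^2
      + ((ct*a0+st*a2)*X - (ct*u0+st*u2)*W + (ct*v0+st*v2)*Y)^2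
      + ((ct*a0+st*a2)*Z - (ct*v0+st*v2)*W - (ct*u0+st*u2)*Y)^2 = 1 ∧
    W = (ct*a0+st*a2)*((ct*a0+st*a2)*W + (ct*u0+st*u2)*X + (ct*v0+st*v2)*Z)
        - (ct*u0+st*u2)*((ct*a0+st*a2)*X - (ct*u0+st*u2)*W + (ct*v0+st*v2)*Y)
        - (ct*v0+st*v2)*((ct*a0+st*a2)*Z - (ct*v0+st*v2)*W - (ct*u0+st*u2)*Y) ∧
    X = (ct*a0+st*a2)*((ct*a0+st*a2)*X - (ct*u0+st*u2)*W + (ct*v0+st*v2)*Y)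
        + (ct*u0+st*u2)*((ct*a0+st*a2)*W + (ct*u0+st*u2)*X + (ct*v0+st*v2)*Z) ∧
    Y = (ct*v0+st*v2)*((ct*a0+st*a2)*X - (ct*u0+st*u2)*W + (ct*v0+st*v2)*Y)
        - (ct*u0+st*u2)*((ct*a0+st*a2)*Z - (ct*v0+st*v2)*W - (ct*u0+st*u2)*Y) ∧
    Z = (ct*a0+st*a2)*((ct*a0+st*a2)*Z - (ct*v0+st*v2)*W - (ct*u0+st*u2)*Y)
        + (ct*v0+st*v2)*((ct*a0+st*a2)*W + (ct*u0+st*u2)*X + (ct*v0+st*v2)*Z) := by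
  have hunit : (ct*a0+st*a2)^2+(ct*u0+st*u2)^2+(ct*v0+st*v2)^2 = 1 := by
    linear_combination ct^2*h1 + st^2*hu2 + 2*ct*st*horth + hpy
  have hLt : (ct*a0+st*a2)*Y + (ct*u0+st*u2)*Z - (ct*v0+st*v2)*X = 0 := by
    linear_combination ct*hL + st*hLe2
  refine ⟨hunit, ?_, ?_, ?_, ?_, ?_⟩
  · linear_combination (W^2+X^2+Y^2+Z^2)*hunit + hNq
      - ((ct*a0+st*a2)*Y + (ct*u0+st*u2)*Z - (ct*v0+st*v2)*X)*hLt
  · linear_combination (-W)*hunit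
  · linear_combination (-X)*hunit + (-(ct*v0+st*v2))*hLt
  · linear_combination (-Y)*hunit + (ct*a0+st*a2)*hLt
  · linear_combination (-Z)*hunit + (ct*u0+st*u2)*hLt

/-- Decomposition of a vector w (in the plane orthogonal to n=(Y,Z,-X)) over the orthonormal
    basis p0, e2 = (n × p0)/N of that plane. -/
lemma decomp (a0 u0 v0 X Y Z N w1 w2 w3 : ℝ)
    (hN2 : N^2 = X^2+Y^2+Z^2) (hNne : N ≠ 0)
    (h1 : a0^2+u0^2+v0^2 = 1)
    (hL : a0*Y+u0*Z-v0*X = 0)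
    (hJ : w1*Y + w2*Z - w3*X = 0) :
    w1 = (w1*a0+w2*u0+w3*v0)*a0
        + ((w1*((Z*v0+X*u0)/N) + w2*((-(X*a0)-Y*v0)/N) + w3*((Y*u0-Z*a0)/N)))*((Z*v0+X*u0)/N)
    ∧ w2 = (w1*a0+w2*u0+w3*v0)*u0
        + ((w1*((Z*v0+X*u0)/N) + w2*((-(X*a0)-Y*v0)/N) + w3*((Y*u0-Z*a0)/N)))*((-(X*a0)-Y*v0)/N)
    ∧ w3 = (w1*a0+w2*u0+w3*v0)*v0
        + ((w1*((Z*v0+X*u0)/N) + w2*((-(X*a0)-Y*v0)/N) + w3*((Y*u0-Z*a0)/N)))*((Y*u0-Z*a0)/N) := by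
  have key1 : N^2*w1 = (w1*a0+w2*u0+w3*v0)*N^2*a0
      + (w1*(Z*v0+X*u0) + w2*(-(X*a0)-Y*v0) + w3*(Y*u0-Z*a0))*(Z*v0+X*u0) := by
    linear_combination (w1 - (w1*a0+w2*u0+w3*v0)*a0)*hN2
      + (-(X^2+Y^2+Z^2)*w1 + Y*(w1*Y+w2*Z-w3*X))*h1
      + (-(Y*(w1*a0+w2*u0+w3*v0)) - a0*(w1*Y+w2*Z-w3*X) + w1*(a0*Y+u0*Z-v0*X))*hL
      + Y*hJ
  have key2 : N^2*w2 = (w1*a0+w2*u0+w3*v0)*N^2*u0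
      + (w1*(Z*v0+X*u0) + w2*(-(X*a0)-Y*v0) + w3*(Y*u0-Z*a0))*(-(X*a0)-Y*v0) := by
    linear_combination (w2 - (w1*a0+w2*u0+w3*v0)*u0)*hN2
      + (-(X^2+Y^2+Z^2)*w2 + Z*(w1*Y+w2*Z-w3*X))*h1
      + (-(Z*(w1*a0+w2*u0+w3*v0)) - u0*(w1*Y+w2*Z-w3*X) + w2*(a0*Y+u0*Z-v0*X))*hL
      + Z*hJ
  have key3 : N^2*w3 = (w1*a0+w2*u0+w3*v0)*N^2*v0
      + (w1*(Z*v0+X*u0) + w2*(-(X*a0)-Y*v0) + w3*(Y*u0-Z*a0))*(Y*u0-Z*a0) := by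
    linear_combination (w3 - (w1*a0+w2*u0+w3*v0)*v0)*hN2
      + (-(X^2+Y^2+Z^2)*w3 + (-X)*(w1*Y+w2*Z-w3*X))*h1
      + (-((-X)*(w1*a0+w2*u0+w3*v0)) - v0*(w1*Y+w2*Z-w3*X) + w3*(a0*Y+u0*Z-v0*X))*hL
      + (-X)*hJ
  refine ⟨?_, ?_, ?_⟩
  · field_simp
    linear_combination key1
  · field_simp
    linear_combination key2
  · field_simp
    linear_combination key3

lemma on2 (α β γ c1 s1 c2 s2 : ℝ)
    (hc1 : c1^2+s1^2 = 1) (hc2 : c2^2+s2^2 = 1) (h12 : c1*c2+s1*s2 = 0) :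
    (α*c1^2 + 2*β*(c1*s1) + γ*s1^2) + (α*c2^2 + 2*β*(c2*s2) + γ*s2^2) = α + γ ∧
    (α*c1^2 + 2*β*(c1*s1) + γ*s1^2) * (α*c2^2 + 2*β*(c2*s2) + γ*s2^2)
      - (α*(c1*c2) + β*(c1*s2+s1*c2) + γ*(s1*s2))^2 = α*γ - β^2 := by
  obtain ⟨D, hD⟩ : ∃ D : ℝ, D = c1*s2 - s1*c2 := ⟨_, rfl⟩
  have hD2 : D^2 = 1 := by
    rw [hD]; linear_combination (c2^2+s2^2)*hc1 + hc2 - (c1*c2+s1*s2)*h12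
  have hc2D : c2 = -s1*D := by linear_combination c1*h12 - c2*hc1 + s1*hD
  have hs2D : s2 = c1*D := by linear_combination s1*h12 - s2*hc1 - c1*hD
  rw [hc2D, hs2D]
  constructor
  · linear_combination (α+γ)*hc1 + (α*s1^2+γ*c1^2-2*β*(c1*s1))*hD2
  · linear_combination ((α*γ - β^2)*(c1^2+s1^2)^2)*hD2
      + (α*γ-β^2)*(c1^2+s1^2+1)*hc1

-- constructors
lemma mem_Gxi_of (Θ : ℝ) (hΘ1 : 0 < Θ) (hΘ2 : Θ ≤ π) (w x z : ℝ)
    (hunit : w^2 + x^2 + z^2 = 1) (hg : Real.cos Θ * x^2 - Real.sin Θ * (x*z) ≤ 0) :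
    q2m w x 0 z ∈ Gxi Θ := by
  obtain ⟨θ, s, hθ0, hθΘ, hxe, hze, hs2, -⟩ := exists_theta Θ hΘ1 hΘ2 x z hg
  obtain ⟨φ, hφ0, hφ4, hcos, hsin⟩ := exists_phi w s (by nlinarith)
  refine ⟨θ, φ, ⟨hθ0, hθΘ⟩, ⟨hφ0, hφ4⟩, ?_⟩
  rw [Rot_eq, hcos, hsin, ← hxe, ← hze]

lemma mem_Gb_of (Θ : ℝ) (hΘ1 : 0 < Θ) (hΘ2 : Θ ≤ π) (w x z : ℝ)
    (hunit : w^2 + x^2 + z^2 = 1) (hg : Real.cos Θ * x^2 - Real.sin Θ * (x*z) = 0) :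
    q2m w x 0 z ∈ Gb Θ := by
  obtain ⟨θ, s, hθ0, hθΘ, hxe, hze, hs2, hbd⟩ := exists_theta Θ hΘ1 hΘ2 x z (le_of_eq hg)
  obtain ⟨φ, hφ0, hφ4, hcos, hsin⟩ := exists_phi w s (by nlinarith)
  rcases hbd hg with hx0 | hθΘ'
  · -- z-rotation : use φ' with cos = w, sin = z
    obtain ⟨φ', hφ0', hφ4', hcos', hsin'⟩ := exists_phi w z (by nlinarith)
    left
    refine ⟨φ', ⟨hφ0', hφ4'⟩, ?_⟩
    rw [Rot_eq, hcos', hsin']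
    simp [hx0]
  · right
    refine ⟨φ, ⟨hφ0, hφ4⟩, ?_⟩
    rw [Rot_eq, hcos, hsin, ← hθΘ', ← hxe, ← hze]

-- destructors
lemma Gxi_dest (Θ : ℝ) (hΘ2 : Θ ≤ π) {M : Matrix (Fin 2) (Fin 2) ℂ} (hM : M ∈ Gxi Θ) :
    ∃ w x z : ℝ, M = q2m w x 0 z ∧ w^2 + x^2 + z^2 = 1 ∧
      Real.cos Θ * x^2 - Real.sin Θ * (x*z) ≤ 0 := by
  obtain ⟨θ, φ, ⟨hθ0, hθΘ⟩, -, hMe⟩ := hM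
  refine ⟨Real.cos (φ/2), Real.sin (φ/2) * Real.sin θ, Real.sin (φ/2) * Real.cos θ,
    by rw [hMe, Rot_eq], ?_, ?_⟩
  · have h1 := Real.sin_sq_add_cos_sq (φ/2)
    have h2 := Real.sin_sq_add_cos_sq θ
    nlinarith
  · have h1 : 0 ≤ Real.sin θ := Real.sin_nonneg_of_nonneg_of_le_pi hθ0 (by linarith)
    have h2 : 0 ≤ Real.sin (Θ - θ) :=
      Real.sin_nonneg_of_nonneg_of_le_pi (by linarith) (by linarith)
    rw [Real.sin_sub] at h2
    nlinarith [sq_nonneg (Real.sin (φ/2)), mul_nonneg (mul_nonneg (sq_nonneg (Real.sin (φ/2))) h1) h2]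

lemma Gb_dest (Θ : ℝ) (hΘ1 : 0 < Θ) (hΘ2 : Θ ≤ π) {M : Matrix (Fin 2) (Fin 2) ℂ} (hM : M ∈ Gb Θ) :
    ∃ w x z : ℝ, M = q2m w x 0 z ∧ w^2 + x^2 + z^2 = 1 ∧
      Real.cos Θ * x^2 - Real.sin Θ * (x*z) = 0 := by
  rcases hM with hM | hM
  · obtain ⟨φ, -, hMe⟩ := hM
    refine ⟨Real.cos (φ/2), 0, Real.sin (φ/2), ?_, ?_, by ring⟩
    · rw [hMe, Rot_eq]; simp
    · have h1 := Real.sin_sq_add_cos_sq (φ/2); nlinarith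
  · obtain ⟨φ, -, hMe⟩ := hM
    refine ⟨Real.cos (φ/2), Real.sin (φ/2) * Real.sin Θ, Real.sin (φ/2) * Real.cos Θ,
      by rw [hMe, Rot_eq], ?_, by ring⟩
    have h1 := Real.sin_sq_add_cos_sq (φ/2)
    have h2 := Real.sin_sq_add_cos_sq Θ
    nlinarith

lemma Gb_sub_Gxi (Θ : ℝ) (hΘ1 : 0 < Θ) : Gb Θ ⊆ Gxi Θ := by
  intro M hM
  rcases hM with hM | hM
  · obtain ⟨φ, hφ, hMe⟩ := hM
    exact ⟨0, φ, ⟨le_refl 0, le_of_lt hΘ1⟩, hφ, hMe⟩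
  · obtain ⟨φ, hφ, hMe⟩ := hM
    exact ⟨Θ, φ, ⟨le_of_lt hΘ1, le_refl Θ⟩, hφ, hMe⟩

lemma core (Θ : ℝ)
    (a0 u0 v0 b0 x0 z0 W X Y Z : ℝ)
    (h1 : a0^2+u0^2+v0^2 = 1) (h2 : b0^2+x0^2+z0^2 = 1)
    (hgA : Real.cos Θ * u0^2 - Real.sin Θ * (u0*v0) ≤ 0)
    (hgB : Real.cos Θ * x0^2 - Real.sin Θ * (x0*z0) ≤ 0)
    (hW : W = a0*b0 - u0*x0 - v0*z0)
    (hX : X = a0*x0 + u0*b0)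
    (hY : Y = v0*x0 - u0*z0)
    (hZ : Z = a0*z0 + v0*b0) :
    (∃ a u v w x z : ℝ,
      a^2+u^2+v^2 = 1 ∧ Real.cos Θ * u^2 - Real.sin Θ * (u*v) = 0 ∧
      w^2+x^2+z^2 = 1 ∧ Real.cos Θ * x^2 - Real.sin Θ * (x*z) ≤ 0 ∧
      W = a*w - u*x - v*z ∧ X = a*x + u*w ∧ Y = v*x - u*z ∧ Z = a*z + v*w) ∧
    (∃ a u v w x z : ℝ,
      a^2+u^2+v^2 = 1 ∧ Real.cos Θ * u^2 - Real.sin Θ * (u*v) ≤ 0 ∧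
      w^2+x^2+z^2 = 1 ∧ Real.cos Θ * x^2 - Real.sin Θ * (x*z) = 0 ∧
      W = a*w - u*x - v*z ∧ X = a*x + u*w ∧ Y = v*x - u*z ∧ Z = a*z + v*w) := by
  have hL : a0*Y + u0*Z - v0*X = 0 := by rw [hX, hY, hZ]; ring
  have hNq : W^2+X^2+Y^2+Z^2 = 1 := by
    rw [hW,hX,hY,hZ]; linear_combination (b0^2+x0^2+z0^2)*h1 + h2
  have hBw0 : a0*W + u0*X + v0*Z = b0 := by rw [hW,hX,hZ]; linear_combination b0*h1
  have hBx0 : a0*X - u0*W + v0*Y = x0 := by rw [hW,hX,hY]; linear_combination x0*h1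
  have hBz0 : a0*Z - v0*W - u0*Y = z0 := by rw [hW,hY,hZ]; linear_combination z0*h1
  by_cases hdeg : X^2+Y^2+Z^2 = 0
  · have hsq : X^2 = 0 ∧ Y^2 = 0 ∧ Z^2 = 0 := by
      refine ⟨?_, ?_, ?_⟩ <;> linarith [sq_nonneg X, sq_nonneg Y, sq_nonneg Z]
    have hX0 : X = 0 := pow_eq_zero_iff two_ne_zero |>.1 hsq.1
    have hY0 : Y = 0 := pow_eq_zero_iff two_ne_zero |>.1 hsq.2.1
    have hZ0 : Z = 0 := pow_eq_zero_iff two_ne_zero |>.1 hsq.2.2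
    have hW2 : W^2 = 1 := by rw [hX0,hY0,hZ0] at hNq; linarith
    constructor
    · refine ⟨W, 0, 0, 1, 0, 0, by linear_combination hW2, by ring, by norm_num, by norm_num,
        by ring, ?_, ?_, ?_⟩
      · rw [hX0]; ring
      · rw [hY0]; ring
      · rw [hZ0]; ring
    · refine ⟨1, 0, 0, W, 0, 0, by norm_num, by norm_num, by linear_combination hW2, by norm_num,
        by ring, ?_, ?_, ?_⟩
      · rw [hX0]; ring
      · rw [hY0]; ring
      · rw [hZ0]; ring
  · have hNN : 0 < X^2+Y^2+Z^2 := lt_of_le_of_ne (by positivity) (Ne.symm hdeg)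
    obtain ⟨N, hN⟩ : ∃ N : ℝ, N = Real.sqrt (X^2+Y^2+Z^2) := ⟨_, rfl⟩
    have hN2 : N^2 = X^2+Y^2+Z^2 := by rw [hN]; exact Real.sq_sqrt (le_of_lt hNN)
    have hNpos : 0 < N := by rw [hN]; exact Real.sqrt_pos.2 hNN
    have hNne : N ≠ 0 := ne_of_gt hNpos
    obtain ⟨a2, ha2⟩ : ∃ t : ℝ, t = (Z*v0+X*u0)/N := ⟨_, rfl⟩
    obtain ⟨u2, hu2⟩ : ∃ t : ℝ, t = (-(X*a0)-Y*v0)/N := ⟨_, rfl⟩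
    obtain ⟨v2, hv2⟩ : ∃ t : ℝ, t = (Y*u0-Z*a0)/N := ⟨_, rfl⟩
    have hu2unit : a2^2+u2^2+v2^2 = 1 := by
      rw [ha2,hu2,hv2]
      field_simp
      linear_combination (X^2+Y^2+Z^2)*h1 - hN2 - (a0*Y+u0*Z-v0*X)*hL
    have horth : a0*a2+u0*u2+v0*v2 = 0 := by rw [ha2,hu2,hv2]; field_simp; ring
    have hLe2 : a2*Y+u2*Z-v2*X = 0 := by rw [ha2,hu2,hv2]; field_simp; ring
    obtain ⟨Bw2, hBw2⟩ : ∃ t : ℝ, t = a2*W + u2*X + v2*Z := ⟨_, rfl⟩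
    obtain ⟨Bx2, hBx2⟩ : ∃ t : ℝ, t = a2*X - u2*W + v2*Y := ⟨_, rfl⟩
    obtain ⟨Bz2, hBz2⟩ : ∃ t : ℝ, t = a2*Z - v2*W - u2*Y := ⟨_, rfl⟩
    have hE2unit : Bw2^2+Bx2^2+Bz2^2 = 1 := by
      rw [hBw2,hBx2,hBz2]
      linear_combination (W^2+X^2+Y^2+Z^2)*hu2unit + hNq - (a2*Y+u2*Z-v2*X)*hLe2
    have hPE : b0*Bw2 + x0*Bx2 + z0*Bz2 = 0 := by
      rw [hBw2,hBx2,hBz2, ← hBw0, ← hBx0, ← hBz0]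
      linear_combination (W^2+X^2+Y^2+Z^2)*horth - (a0*Y+u0*Z-v0*X)*hLe2
    have hJ0 : Y*b0 - Z*x0 + X*z0 = 0 := by
      rw [← hBw0, ← hBx0, ← hBz0]; linear_combination W*hL
    have hJ2 : Y*Bw2 - Z*Bx2 + X*Bz2 = 0 := by
      rw [hBw2,hBx2,hBz2]; linear_combination W*hLe2
    -- decomposition of P0 = (b0,-x0,-z0)
    obtain ⟨hdP1, hdP2, hdP3⟩ := decomp a0 u0 v0 X Y Z N b0 (-x0) (-z0) hN2 hNne h1 hL
      (by linear_combination hJ0)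
    rw [← ha2, ← hu2, ← hv2] at hdP1 hdP2 hdP3
    obtain ⟨c1, hc1d⟩ : ∃ t : ℝ, t = b0*a0 + -x0*u0 + -z0*v0 := ⟨_, rfl⟩
    obtain ⟨s1, hs1d⟩ : ∃ t : ℝ, t = b0*a2 + -x0*u2 + -z0*v2 := ⟨_, rfl⟩
    have hdQ1 : b0 = c1*a0 + s1*a2 := by rw [hc1d, hs1d]; linear_combination hdP1
    have hdQ2 : -x0 = c1*u0 + s1*u2 := by rw [hc1d, hs1d]; linear_combination hdP2
    have hdQ3 : -z0 = c1*v0 + s1*v2 := by rw [hc1d, hs1d]; linear_combination hdP3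
    -- decomposition of E2 = (Bw2,-Bx2,-Bz2)
    obtain ⟨hdR1, hdR2, hdR3⟩ := decomp a0 u0 v0 X Y Z N Bw2 (-Bx2) (-Bz2) hN2 hNne h1 hL
      (by linear_combination hJ2)
    rw [← ha2, ← hu2, ← hv2] at hdR1 hdR2 hdR3
    obtain ⟨c2, hc2d⟩ : ∃ t : ℝ, t = Bw2*a0 + -Bx2*u0 + -Bz2*v0 := ⟨_, rfl⟩
    obtain ⟨s2, hs2d⟩ : ∃ t : ℝ, t = Bw2*a2 + -Bx2*u2 + -Bz2*v2 := ⟨_, rfl⟩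
    have hdR1' : Bw2 = c2*a0 + s2*a2 := by rw [hc2d, hs2d]; linear_combination hdR1
    have hdR2' : -Bx2 = c2*u0 + s2*u2 := by rw [hc2d, hs2d]; linear_combination hdR2
    have hdR3' : -Bz2 = c2*v0 + s2*v2 := by rw [hc2d, hs2d]; linear_combination hdR3
    -- circle relations
    have hc1s1 : c1^2+s1^2 = 1 := by
      have e : (c1*a0+s1*a2)^2 + (c1*u0+s1*u2)^2 + (c1*v0+s1*v2)^2 = 1 := by
        rw [← hdQ1, ← hdQ2, ← hdQ3]; linear_combination h2
      linear_combination e - c1^2*h1 - s1^2*hu2unit - 2*c1*s1*horth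
    have hc2s2 : c2^2+s2^2 = 1 := by
      have e : (c2*a0+s2*a2)^2 + (c2*u0+s2*u2)^2 + (c2*v0+s2*v2)^2 = 1 := by
        rw [← hdR1', ← hdR2', ← hdR3']; linear_combination hE2unit
      linear_combination e - c2^2*h1 - s2^2*hu2unit - 2*c2*s2*horth
    have h12 : c1*c2+s1*s2 = 0 := by
      have e : (c1*a0+s1*a2)*(c2*a0+s2*a2) + (c1*u0+s1*u2)*(c2*u0+s2*u2)
          + (c1*v0+s1*v2)*(c2*v0+s2*v2) = 0 := by
        rw [← hdQ1, ← hdQ2, ← hdQ3, ← hdR1', ← hdR2', ← hdR3']; linear_combination hPE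
      linear_combination e - c1*c2*h1 - s1*s2*hu2unit - (c1*s2+s1*c2)*horth
    -- quadratic form coefficients
    obtain ⟨al, hal⟩ : ∃ t : ℝ, t = Real.cos Θ * u0^2 - Real.sin Θ * (u0*v0) := ⟨_, rfl⟩
    obtain ⟨be, hbe⟩ : ∃ t : ℝ, t = Real.cos Θ * (u0*u2) - Real.sin Θ * (u0*v2+u2*v0)/2 := ⟨_, rfl⟩
    obtain ⟨ga, hga⟩ : ∃ t : ℝ, t = Real.cos Θ * u2^2 - Real.sin Θ * (u2*v2) := ⟨_, rfl⟩
    obtain ⟨al', hal'⟩ : ∃ t : ℝ, t = Real.cos Θ * x0^2 - Real.sin Θ * (x0*z0) := ⟨_, rfl⟩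
    obtain ⟨be', hbe'⟩ : ∃ t : ℝ,
      t = Real.cos Θ * (x0*Bx2) - Real.sin Θ * (x0*Bz2+Bx2*z0)/2 := ⟨_, rfl⟩
    obtain ⟨ga', hga'⟩ : ∃ t : ℝ, t = Real.cos Θ * Bx2^2 - Real.sin Θ * (Bx2*Bz2) := ⟨_, rfl⟩
    have hx0e : x0 = -(c1*u0+s1*u2) := by linarith [hdQ2]
    have hz0e : z0 = -(c1*v0+s1*v2) := by linarith [hdQ3]
    have hBx2e : Bx2 = -(c2*u0+s2*u2) := by linarith [hdR2']
    have hBz2e : Bz2 = -(c2*v0+s2*v2) := by linarith [hdR3']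
    have hA'eq : al' = al*c1^2 + 2*be*(c1*s1) + ga*s1^2 := by
      rw [hal', hx0e, hz0e, hal, hbe, hga]; ring
    have hG'eq : ga' = al*c2^2 + 2*be*(c2*s2) + ga*s2^2 := by
      rw [hga', hBx2e, hBz2e, hal, hbe, hga]; ring
    have hB'eq : be' = al*(c1*c2) + be*(c1*s2+s1*c2) + ga*(s1*s2) := by
      rw [hbe', hx0e, hz0e, hBx2e, hBz2e, hal, hbe, hga]; ring
    obtain ⟨hsum0, hdet0⟩ := on2 al be ga c1 s1 c2 s2 hc1s1 hc2s2 h12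
    have hsum : al + ga = al' + ga' := by rw [hA'eq, hG'eq]; linarith [hsum0]
    have hdet : al*ga - be^2 = al'*ga'-be'^2 := by
      rw [hA'eq, hG'eq, hB'eq]; linear_combination -hdet0
    have halle : al ≤ 0 := by rw [hal]; exact hgA
    have halle' : al' ≤ 0 := by rw [hal']; exact hgB
    -- zeros of the two quadratic forms
    have hzA : ∃ x : ℝ, al*(Real.cos x)^2 + 2*be*(Real.cos x*Real.sin x)
        + ga*(Real.sin x)^2 = 0 := by
      by_cases hh : u0^2 + u2^2 = 0
      · have hu00 : u0 = 0 := by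
          have h5 : u0^2 = 0 := by linarith [sq_nonneg u0, sq_nonneg u2]
          exact pow_eq_zero_iff two_ne_zero |>.1 h5
        refine ⟨0, ?_⟩
        rw [hal, hbe, hga, hu00]
        simp
      · obtain ⟨h3, hh3⟩ : ∃ t : ℝ, t = Real.sqrt (u0^2+u2^2) := ⟨_, rfl⟩
        have hh3pos : 0 < h3 := by
          rw [hh3]; exact Real.sqrt_pos.2 (lt_of_le_of_ne (by positivity) (Ne.symm hh))
        have hh32 : h3^2 = u0^2+u2^2 := by rw [hh3]; exact Real.sq_sqrt (by positivity)
        obtain ⟨x, hcx, hsx⟩ := exists_cos_sin (u2/h3) (-u0/h3)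
          (by field_simp; linear_combination -hh32)
        refine ⟨x, ?_⟩
        have key : al*(Real.cos x)^2 + 2*be*(Real.cos x*Real.sin x) + ga*(Real.sin x)^2
            = Real.cos Θ * (Real.cos x*u0+Real.sin x*u2)^2
              - Real.sin Θ * ((Real.cos x*u0+Real.sin x*u2)*(Real.cos x*v0+Real.sin x*v2)) := by
          rw [hal, hbe, hga]; ring
        have huz : Real.cos x*u0+Real.sin x*u2 = 0 := by
          rw [hcx, hsx]; field_simp; ring
        rw [key, huz]; ring
    have hzB : ∃ x : ℝ, al'*(Real.cos x)^2 + 2*be'*(Real.cos x*Real.sin x)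
        + ga'*(Real.sin x)^2 = 0 := by
      by_cases hh : x0^2 + Bx2^2 = 0
      · have hu00 : x0 = 0 := by
          have h5 : x0^2 = 0 := by linarith [sq_nonneg x0, sq_nonneg Bx2]
          exact pow_eq_zero_iff two_ne_zero |>.1 h5
        refine ⟨0, ?_⟩
        rw [hal', hbe', hga', hu00]
        simp
      · obtain ⟨h3, hh3⟩ : ∃ t : ℝ, t = Real.sqrt (x0^2+Bx2^2) := ⟨_, rfl⟩
        have hh3pos : 0 < h3 := by
          rw [hh3]; exact Real.sqrt_pos.2 (lt_of_le_of_ne (by positivity) (Ne.symm hh))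
        have hh32 : h3^2 = x0^2+Bx2^2 := by rw [hh3]; exact Real.sq_sqrt (by positivity)
        obtain ⟨x, hcx, hsx⟩ := exists_cos_sin (Bx2/h3) (-x0/h3)
          (by field_simp; linear_combination -hh32)
        refine ⟨x, ?_⟩
        have key : al'*(Real.cos x)^2 + 2*be'*(Real.cos x*Real.sin x) + ga'*(Real.sin x)^2
            = Real.cos Θ * (Real.cos x*x0+Real.sin x*Bx2)^2
              - Real.sin Θ * ((Real.cos x*x0+Real.sin x*Bx2)*(Real.cos x*z0+Real.sin x*Bz2)) := by
          rw [hal', hbe', hga']; ring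
        have huz : Real.cos x*x0+Real.sin x*Bx2 = 0 := by
          rw [hcx, hsx]; field_simp; ring
        rw [key, huz]; ring
    constructor
    · -- boundary on the A side
      obtain ⟨t, ht1, ht2⟩ := sinmain al be ga al' be' ga' hsum hdet halle halle' hzA
      obtain ⟨bu1, bu2, bW, bX, bY, bZ⟩ := build a0 u0 v0 a2 u2 v2 W X Y Z
        (Real.cos t) (Real.sin t)
        (by linear_combination Real.sin_sq_add_cos_sq t) h1 hu2unit horth hL hLe2 hNq
      refine ⟨Real.cos t*a0+Real.sin t*a2, Real.cos t*u0+Real.sin t*u2,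
        Real.cos t*v0+Real.sin t*v2,
        (Real.cos t*a0+Real.sin t*a2)*W + (Real.cos t*u0+Real.sin t*u2)*X
          + (Real.cos t*v0+Real.sin t*v2)*Z,
        (Real.cos t*a0+Real.sin t*a2)*X - (Real.cos t*u0+Real.sin t*u2)*W
          + (Real.cos t*v0+Real.sin t*v2)*Y,
        (Real.cos t*a0+Real.sin t*a2)*Z - (Real.cos t*v0+Real.sin t*v2)*W
          - (Real.cos t*u0+Real.sin t*u2)*Y,
        bu1, ?_, bu2, ?_, bW, bX, bY, bZ⟩
      · have key : Real.cos Θ * (Real.cos t*u0+Real.sin t*u2)^2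
            - Real.sin Θ * ((Real.cos t*u0+Real.sin t*u2)*(Real.cos t*v0+Real.sin t*v2))
            = al*(Real.cos t)^2 + 2*be*(Real.cos t*Real.sin t) + ga*(Real.sin t)^2 := by
          rw [hal, hbe, hga]; ring
        rw [key]; exact ht1
      · have hxlin : (Real.cos t*a0+Real.sin t*a2)*X - (Real.cos t*u0+Real.sin t*u2)*W
            + (Real.cos t*v0+Real.sin t*v2)*Y = Real.cos t*x0 + Real.sin t*Bx2 := by
          rw [← hBx0, hBx2]; ring
        have hzlin : (Real.cos t*a0+Real.sin t*a2)*Z - (Real.cos t*v0+Real.sin t*v2)*W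
            - (Real.cos t*u0+Real.sin t*u2)*Y = Real.cos t*z0 + Real.sin t*Bz2 := by
          rw [← hBz0, hBz2]; ring
        rw [hxlin, hzlin]
        have key : Real.cos Θ * (Real.cos t*x0+Real.sin t*Bx2)^2
            - Real.sin Θ * ((Real.cos t*x0+Real.sin t*Bx2)*(Real.cos t*z0+Real.sin t*Bz2))
            = al'*(Real.cos t)^2 + 2*be'*(Real.cos t*Real.sin t) + ga'*(Real.sin t)^2 := by
          rw [hal', hbe', hga']; ring
        rw [key]; exact ht2
    · -- boundary on the B side
      obtain ⟨t, ht1, ht2⟩ := sinmain al' be' ga' al be ga hsum.symm hdet.symm halle' halle hzB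
      obtain ⟨bu1, bu2, bW, bX, bY, bZ⟩ := build a0 u0 v0 a2 u2 v2 W X Y Z
        (Real.cos t) (Real.sin t)
        (by linear_combination Real.sin_sq_add_cos_sq t) h1 hu2unit horth hL hLe2 hNq
      refine ⟨Real.cos t*a0+Real.sin t*a2, Real.cos t*u0+Real.sin t*u2,
        Real.cos t*v0+Real.sin t*v2,
        (Real.cos t*a0+Real.sin t*a2)*W + (Real.cos t*u0+Real.sin t*u2)*X
          + (Real.cos t*v0+Real.sin t*v2)*Z,
        (Real.cos t*a0+Real.sin t*a2)*X - (Real.cos t*u0+Real.sin t*u2)*W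
          + (Real.cos t*v0+Real.sin t*v2)*Y,
        (Real.cos t*a0+Real.sin t*a2)*Z - (Real.cos t*v0+Real.sin t*v2)*W
          - (Real.cos t*u0+Real.sin t*u2)*Y,
        bu1, ?_, bu2, ?_, bW, bX, bY, bZ⟩
      · have key : Real.cos Θ * (Real.cos t*u0+Real.sin t*u2)^2
            - Real.sin Θ * ((Real.cos t*u0+Real.sin t*u2)*(Real.cos t*v0+Real.sin t*v2))
            = al*(Real.cos t)^2 + 2*be*(Real.cos t*Real.sin t) + ga*(Real.sin t)^2 := by
          rw [hal, hbe, hga]; ring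
        rw [key]; exact ht2
      · have hxlin : (Real.cos t*a0+Real.sin t*a2)*X - (Real.cos t*u0+Real.sin t*u2)*W
            + (Real.cos t*v0+Real.sin t*v2)*Y = Real.cos t*x0 + Real.sin t*Bx2 := by
          rw [← hBx0, hBx2]; ring
        have hzlin : (Real.cos t*a0+Real.sin t*a2)*Z - (Real.cos t*v0+Real.sin t*v2)*W
            - (Real.cos t*u0+Real.sin t*u2)*Y = Real.cos t*z0 + Real.sin t*Bz2 := by
          rw [← hBz0, hBz2]; ring
        rw [hxlin, hzlin]
        have key : Real.cos Θ * (Real.cos t*x0+Real.sin t*Bx2)^2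
            - Real.sin Θ * ((Real.cos t*x0+Real.sin t*Bx2)*(Real.cos t*z0+Real.sin t*Bz2))
            = al'*(Real.cos t)^2 + 2*be'*(Real.cos t*Real.sin t) + ga'*(Real.sin t)^2 := by
          rw [hal', hbe', hga']; ring
        rw [key]; exact ht1

lemma main_sub (Θ : ℝ) (hΘ1 : 0 < Θ) (hΘ2 : Θ ≤ π) {M : Matrix (Fin 2) (Fin 2) ℂ}
    (hM : M ∈ setMul (Gxi Θ) (Gxi Θ)) :
    M ∈ setMul (Gb Θ) (Gxi Θ) ∧ M ∈ setMul (Gxi Θ) (Gb Θ) := by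
  obtain ⟨A, hA, B, hB, hMe⟩ := hM
  obtain ⟨a0, u0, v0, hAe, hA1, hAg⟩ := Gxi_dest Θ hΘ2 hA
  obtain ⟨b0, x0, z0, hBe, hB1, hBg⟩ := Gxi_dest Θ hΘ2 hB
  obtain ⟨P1, P2⟩ := core Θ a0 u0 v0 b0 x0 z0 (a0*b0 - u0*x0 - v0*z0) (a0*x0 + u0*b0)
    (v0*x0 - u0*z0) (a0*z0 + v0*b0) hA1 hB1 hAg hBg rfl rfl rfl rfl
  constructor
  · obtain ⟨a, u, v, w, x, z, hu1, hg1, hu2, hg2, eW, eX, eY, eZ⟩ := P1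
    refine ⟨q2m a u 0 v, mem_Gb_of Θ hΘ1 hΘ2 a u v hu1 hg1, q2m w x 0 z,
      mem_Gxi_of Θ hΘ1 hΘ2 w x z hu2 hg2, ?_⟩
    rw [hMe, hAe, hBe, q2m_mul, q2m_mul]
    have c1 : a0*b0 - u0*x0 - 0*0 - v0*z0 = a*w - u*x - 0*0 - v*z := by linear_combination eW
    have c2 : a0*x0 + u0*b0 + 0*z0 - v0*0 = a*x + u*w + 0*z - v*0 := by linear_combination eX
    have c3 : a0*0 + 0*b0 + v0*x0 - u0*z0 = a*0 + 0*w + v*x - u*z := by linear_combination eY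
    have c4 : a0*z0 + v0*b0 + u0*0 - 0*x0 = a*z + v*w + u*0 - 0*x := by linear_combination eZ
    rw [c1, c2, c3, c4]
  · obtain ⟨a, u, v, w, x, z, hu1, hg1, hu2, hg2, eW, eX, eY, eZ⟩ := P2
    refine ⟨q2m a u 0 v, mem_Gxi_of Θ hΘ1 hΘ2 a u v hu1 hg1, q2m w x 0 z,
      mem_Gb_of Θ hΘ1 hΘ2 w x z hu2 hg2, ?_⟩
    rw [hMe, hAe, hBe, q2m_mul, q2m_mul]
    have c1 : a0*b0 - u0*x0 - 0*0 - v0*z0 = a*w - u*x - 0*0 - v*z := by linear_combination eW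
    have c2 : a0*x0 + u0*b0 + 0*z0 - v0*0 = a*x + u*w + 0*z - v*0 := by linear_combination eX
    have c3 : a0*0 + 0*b0 + v0*x0 - u0*z0 = a*0 + 0*w + v*x - u*z := by linear_combination eY
    have c4 : a0*z0 + v0*b0 + u0*0 - 0*x0 = a*z + v*w + u*0 - 0*x := by linear_combination eZ
    rw [c1, c2, c3, c4]

theorem stmt5 (Θ : ℝ) (hΘ : Θ ∈ Set.Ioc 0 π) :
    setMul (Gxi Θ) (Gxi Θ) = setMul (Gb Θ) (Gxi Θ) ∧
    setMul (Gb Θ) (Gxi Θ) = setMul (Gxi Θ) (Gb Θ) := by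
  obtain ⟨hΘ1, hΘ2⟩ := hΘ
  have hGb := Gb_sub_Gxi Θ hΘ1
  have hmono1 : setMul (Gb Θ) (Gxi Θ) ⊆ setMul (Gxi Θ) (Gxi Θ) := by
    rintro M ⟨A, hA, B, hB, rfl⟩; exact ⟨A, hGb hA, B, hB, rfl⟩
  have hmono2 : setMul (Gxi Θ) (Gb Θ) ⊆ setMul (Gxi Θ) (Gxi Θ) := by
    rintro M ⟨A, hA, B, hB, rfl⟩; exact ⟨A, hA, B, hGb hB, rfl⟩
  have hsub1 : setMul (Gxi Θ) (Gxi Θ) ⊆ setMul (Gb Θ) (Gxi Θ) :=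
    fun M hM => (main_sub Θ hΘ1 hΘ2 hM).1
  have hsub2 : setMul (Gxi Θ) (Gxi Θ) ⊆ setMul (Gxi Θ) (Gb Θ) :=
    fun M hM => (main_sub Θ hΘ1 hΘ2 hM).2
  constructor
  · exact Set.Subset.antisymm hsub1 hmono1
  · exact Set.Subset.antisymm (fun M hM => hsub2 (hmono1 hM)) (fun M hM => hsub1 (hmono2 hM))
end

section
/- Fix Θ ∈ (0,π]. Let θ ∈ [0,π), ψ ∈ [0,π), φ ∈ [0,4π). Then R(θ,ψ,φ) ∈ 𝒢_ξ·𝒢_ξ (i.e., it is a product of two rotations with axes in the x–z plane making angle at most Θ with ẑ) if and only if at least one of the following holds: (i) φ = 0 or φ = 2π; (ii) θ = 0; (iii) (sin ψ · cos(φ/2) + cos ψ · sin(φ/2) · cos θ)/(sin(φ/2) · sin θ) ≥ cot Θ or (−sin ψ · cos(φ/2) + cos ψ · sin(φ/2) · cos θ)/(sin(φ/2) · sin θ) ≥ cot Θ; (iv) Θ = π. -/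
open Real

noncomputable def Qmat (w x y z : ℝ) : Matrix (Fin 2) (Fin 2) ℂ :=
  !![(w : ℂ) - Complex.I * (z:ℂ), -(y:ℂ) - Complex.I * (x:ℂ);
     (y:ℂ) - Complex.I * (x:ℂ), (w:ℂ) + Complex.I * (z:ℂ)]

lemma Rot_eq_Q (θ ψ φ : ℝ) :
    Rot θ ψ φ = Qmat (Real.cos (φ/2)) (Real.sin (φ/2) * Real.sin θ * Real.cos ψ)
      (Real.sin (φ/2) * Real.sin θ * Real.sin ψ) (Real.sin (φ/2) * Real.cos θ) := by
  unfold Rot Qmat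
  have h1 : Complex.exp (Complex.I * (ψ:ℂ)) = (Real.cos ψ : ℂ) + (Real.sin ψ:ℂ) * Complex.I := by
    rw [mul_comm, Complex.exp_mul_I, Complex.ofReal_cos, Complex.ofReal_sin]
  have h2 : Complex.exp (-(Complex.I * (ψ:ℂ))) = (Real.cos ψ : ℂ) - (Real.sin ψ:ℂ) * Complex.I := by
    have e : -(Complex.I * (ψ:ℂ)) = ((-ψ : ℝ):ℂ) * Complex.I := by push_cast; ring
    rw [e, Complex.exp_mul_I, ← Complex.ofReal_cos, ← Complex.ofReal_sin, Real.cos_neg,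
      Real.sin_neg]
    push_cast; ring
  rw [h1, h2]
  ext i j
  fin_cases i <;> fin_cases j <;> simp [Complex.ext_iff] <;>
    first
    | (constructor <;> (first | trivial | ring))
    | ring

lemma Q_mul (w x y z w' x' y' z' : ℝ) :
    Qmat w x y z * Qmat w' x' y' z' =
      Qmat (w*w' - x*x' - y*y' - z*z') (w*x' + x*w' + y*z' - z*y')
        (w*y' + y*w' + z*x' - x*z') (w*z' + z*w' + x*y' - y*x') := by
  unfold Qmat
  rw [Matrix.mul_fin_two]
  ext i j
  fin_cases i <;> fin_cases j <;> simp [Complex.ext_iff] <;>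
    first
    | (constructor <;> (first | trivial | ring))
    | ring

lemma Q_inj {w x y z w' x' y' z' : ℝ} (h : Qmat w x y z = Qmat w' x' y' z') :
    w = w' ∧ x = x' ∧ y = y' ∧ z = z' := by
  have h00 : Qmat w x y z 0 0 = Qmat w' x' y' z' 0 0 := by rw [h]
  have h01 : Qmat w x y z 0 1 = Qmat w' x' y' z' 0 1 := by rw [h]
  simp [Qmat, Complex.ext_iff] at h00 h01
  refine ⟨h00.1, ?_, ?_, ?_⟩ <;> [skip; skip; skip]
  · have := h01.2; linarith
  · have := h01.1; linarith
  · have := h00.2; linarith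

lemma Q_congr {w x y z w' x' y' z' : ℝ} (h1 : w = w') (h2 : x = x') (h3 : y = y')
    (h4 : z = z') : Qmat w x y z = Qmat w' x' y' z' := by rw [h1, h2, h3, h4]

lemma theta_aux {Θ b c ρ : ℝ} (hΘ0 : 0 < Θ) (hΘπ : Θ ≤ π) (hρ : 0 < ρ)
    (hbc : b^2 + c^2 = ρ^2) (hb : 0 ≤ b) (ht : b * Real.cos Θ - c * Real.sin Θ ≤ 0) :
    ∃ θ₁, θ₁ ∈ Set.Icc 0 Θ ∧ Real.sin θ₁ = b/ρ ∧ Real.cos θ₁ = c/ρ := by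
  have hc1 : -1 ≤ c/ρ := by
    rw [le_div_iff₀ hρ]; nlinarith
  have hc2 : c/ρ ≤ 1 := by
    rw [div_le_one hρ]; nlinarith
  refine ⟨Real.arccos (c/ρ), ⟨Real.arccos_nonneg _, ?_⟩, ?_, Real.cos_arccos hc1 hc2⟩
  · -- arccos (c/ρ) ≤ Θ
    by_contra hlt
    push_neg at hlt
    have hπ : Real.arccos (c/ρ) ≤ π := Real.arccos_le_pi _
    have hsin : Real.sin (Real.arccos (c/ρ) - Θ) > 0 :=
      Real.sin_pos_of_pos_of_lt_pi (by linarith) (by linarith)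
    rw [Real.sin_sub, Real.sin_arccos, Real.cos_arccos hc1 hc2] at hsin
    have hs : Real.sqrt (1 - (c/ρ)^2) = b/ρ := by
      have : 1 - (c/ρ)^2 = (b/ρ)^2 := by
        field_simp; nlinarith
      rw [this, Real.sqrt_sq (by positivity)]
    rw [hs] at hsin
    have hmul : (b/ρ * Real.cos Θ - c/ρ * Real.sin Θ) * ρ = b * Real.cos Θ - c * Real.sin Θ := by
      field_simp
    nlinarith [mul_pos hsin hρ]
  · rw [Real.sin_arccos]
    have : 1 - (c/ρ)^2 = (b/ρ)^2 := by field_simp; nlinarith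
    rw [this, Real.sqrt_sq (by positivity)]

lemma Gxi_iff {Θ : ℝ} (hΘ0 : 0 < Θ) (hΘπ : Θ ≤ π) (M : Matrix (Fin 2) (Fin 2) ℂ) :
    M ∈ Gxi Θ ↔ ∃ a b c : ℝ, a^2 + b^2 + c^2 = 1 ∧
      b * (b * Real.cos Θ - c * Real.sin Θ) ≤ 0 ∧ M = Qmat a b 0 c := by
  have hπ := Real.pi_pos
  constructor
  · rintro ⟨t, f, ⟨ht0, htΘ⟩, ⟨hf0, hf4⟩, rfl⟩
    refine ⟨Real.cos (f/2), Real.sin (f/2) * Real.sin t, Real.sin (f/2) * Real.cos t, ?_, ?_, ?_⟩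
    · have := Real.sin_sq_add_cos_sq (f/2)
      have := Real.sin_sq_add_cos_sq t
      nlinarith
    · have h1 : 0 ≤ Real.sin t := Real.sin_nonneg_of_nonneg_of_le_pi ht0 (le_trans htΘ hΘπ)
      have h2 : 0 ≤ Real.sin (Θ - t) :=
        Real.sin_nonneg_of_nonneg_of_le_pi (by linarith) (by linarith)
      have key : Real.sin t * Real.cos Θ - Real.cos t * Real.sin Θ = -Real.sin (Θ - t) := by
        rw [Real.sin_sub]; ring
      have h3 : Real.sin (f/2) * Real.sin t * (Real.sin (f/2) * Real.sin t * Real.cos Θ -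
          Real.sin (f/2) * Real.cos t * Real.sin Θ)
          = Real.sin (f/2)^2 * (Real.sin t * (-(Real.sin (Θ - t)))) := by
        rw [← key]; ring
      rw [h3]
      nlinarith [sq_nonneg (Real.sin (f/2)), mul_nonneg h1 h2]
    · rw [Rot_eq_Q]; simp
  · rintro ⟨a, b, c, hn, hK, rfl⟩
    have ha1 : -1 ≤ a := by nlinarith
    have ha2 : a ≤ 1 := by nlinarith
    by_cases hbc : b = 0 ∧ c = 0
    · obtain ⟨rfl, rfl⟩ := hbc
      have ha : a = 1 ∨ a = -1 := by
        rcases mul_self_eq_one_iff.mp (by nlinarith : a * a = 1) with h | h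
        · exact Or.inl h
        · exact Or.inr h
      rcases ha with rfl | rfl
      · exact ⟨0, 0, ⟨le_refl _, le_of_lt hΘ0⟩, ⟨le_refl _, by linarith⟩,
          by rw [Rot_eq_Q]; simp⟩
      · refine ⟨0, 2*π, ⟨le_refl _, le_of_lt hΘ0⟩, ⟨by linarith, by linarith⟩, ?_⟩
        rw [Rot_eq_Q]
        norm_num
    · have hρ2 : 0 < b^2 + c^2 := by
        rcases not_and_or.mp hbc with h | h
        · nlinarith [sq_nonneg c, pow_pos (abs_pos.mpr h) 2, sq_abs b]
        · nlinarith [sq_nonneg b, pow_pos (abs_pos.mpr h) 2, sq_abs c]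
      set ρ := Real.sqrt (b^2 + c^2) with hρdef
      have hρ : 0 < ρ := Real.sqrt_pos.mpr hρ2
      have hρsq : b^2 + c^2 = ρ^2 := (Real.sq_sqrt hρ2.le).symm
      have haρ : a^2 + ρ^2 = 1 := by rw [← hρsq]; linarith
      rcases mul_nonpos_iff.mp hK with ⟨hb, ht⟩ | ⟨ht, hb⟩
      · -- 0 ≤ b, b cos Θ - c sin Θ ≤ 0
        obtain ⟨θ₁, hθ₁, hsin₁, hcos₁⟩ := theta_aux hΘ0 hΘπ hρ hρsq hb ht
        refine ⟨θ₁, 2 * Real.arccos a, hθ₁, ⟨by linarith [Real.arccos_nonneg a], ?_⟩, ?_⟩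
        · have := Real.arccos_le_pi a; linarith
        · rw [Rot_eq_Q]
          have h2 : 2 * Real.arccos a / 2 = Real.arccos a := by ring
          rw [h2, Real.cos_arccos ha1 ha2, Real.sin_arccos]
          have hsq : Real.sqrt (1 - a^2) = ρ := by
            rw [show 1 - a^2 = ρ^2 by linarith, Real.sqrt_sq hρ.le]
          rw [hsq, hsin₁, hcos₁]
          have e1 : ρ * (b/ρ) = b := by field_simp
          have e2 : ρ * (c/ρ) = c := by field_simp
          simp [e1, e2]
      · -- b ≤ 0, 0 ≤ b cos Θ - c sin Θ  (note mul_nonpos gives this order)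
        obtain ⟨θ₁, hθ₁, hsin₁, hcos₁⟩ := theta_aux hΘ0 hΘπ hρ (by linarith : (-b)^2 + (-c)^2 = ρ^2)
          (by linarith) (by linarith)
        have halt : a < 1 := by nlinarith
        have harc : 0 < Real.arccos a := Real.arccos_pos.mpr halt
        refine ⟨θ₁, 4*π - 2 * Real.arccos a, hθ₁, ⟨?_, by linarith⟩, ?_⟩
        · have := Real.arccos_le_pi a; linarith
        · rw [Rot_eq_Q]
          have h2 : (4*π - 2 * Real.arccos a) / 2 = 2*π - Real.arccos a := by ring
          rw [h2]
          have hcosv : Real.cos (2*π - Real.arccos a) = a := by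
            rw [Real.cos_sub, Real.cos_two_pi, Real.sin_two_pi, Real.cos_arccos ha1 ha2]; ring
          have hsinv : Real.sin (2*π - Real.arccos a) = -ρ := by
            rw [Real.sin_sub, Real.cos_two_pi, Real.sin_two_pi, Real.sin_arccos]
            rw [show 1 - a^2 = ρ^2 by linarith, Real.sqrt_sq hρ.le]; ring
          rw [hcosv, hsinv, hsin₁, hcos₁]
          have e1 : -ρ * (-b/ρ) = b := by field_simp
          have e2 : -ρ * (-c/ρ) = c := by field_simp
          simp only [e1, e2]
          norm_num

def MEM (Θ w x y z : ℝ) : Prop := ∃ a b c a' b' c' : ℝ,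
  a^2 + b^2 + c^2 = 1 ∧ a'^2 + b'^2 + c'^2 = 1 ∧
  b * (b * Real.cos Θ - c * Real.sin Θ) ≤ 0 ∧ b' * (b' * Real.cos Θ - c' * Real.sin Θ) ≤ 0 ∧
  w = a*a' - b*b' - c*c' ∧ x = a*b' + a'*b ∧ y = c*b' - b*c' ∧ z = a*c' + a'*c

lemma MEM_flip {Θ w x y z : ℝ} (h : MEM Θ w x y z) : MEM Θ w x (-y) z := by
  obtain ⟨a, b, c, a', b', c', h1, h2, hK1, hK2, hw, hx, hy, hz⟩ := h
  exact ⟨a', b', c', a, b, c, h2, h1, hK2, hK1,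
    by rw [hw]; ring, by rw [hx]; ring, by rw [hy]; ring, by rw [hz]; ring⟩

lemma mem_of_E {Θ w x y z : ℝ} (hq : w^2 + x^2 + y^2 + z^2 = 1)
    (hE : 0 ≤ Real.sin Θ * (x*z + w*y) - Real.cos Θ * (x^2 + y^2)) :
    MEM Θ w x y z := by
  set cT := Real.cos Θ with hcT
  set sT := Real.sin Θ with hsT
  have pyth : sT^2 + cT^2 = 1 := Real.sin_sq_add_cos_sq Θ
  by_cases hN : (x*cT - z*sT)^2 + y^2 = 0
  · have hx0 : x*cT - z*sT = 0 := by nlinarith [sq_nonneg (x*cT - z*sT), sq_nonneg y]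
    have hy0 : y = 0 := by nlinarith [sq_nonneg (x*cT - z*sT), sq_nonneg y]
    refine ⟨1, 0, 0, w, x, z, by norm_num, by rw [← hq, hy0]; ring, by norm_num, ?_,
      by ring, by ring, by rw [hy0]; ring, by ring⟩
    calc x * (x * cT - z * sT) = x * 0 := by rw [hx0]
    _ ≤ 0 := by norm_num
  · have hn2 : 0 < (x*cT - z*sT)^2 + y^2 := by
      rcases lt_or_eq_of_le (by positivity : (0:ℝ) ≤ (x*cT - z*sT)^2 + y^2) with h | h
      · exact h
      · exact absurd h.symm hN
    set N := Real.sqrt ((x*cT - z*sT)^2 + y^2) with hNdef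
    have hN0 : 0 < N := Real.sqrt_pos.mpr hn2
    have hNsq : N^2 = (x*cT - z*sT)^2 + y^2 := Real.sq_sqrt hn2.le
    set a := (x*cT - z*sT)/N with ha
    set b := y*sT/N with hb
    set c := y*cT/N with hc
    have h1 : a^2 + b^2 + c^2 = 1 := by
      have e : a^2 + b^2 + c^2 = ((x*cT - z*sT)^2 + y^2*(sT^2+cT^2))/N^2 := by
        rw [ha, hb, hc]; ring
      rw [e, pyth, mul_one, ← hNsq, div_self (by positivity)]
    have h0 : a*y + b*z - c*x = 0 := by
      rw [ha, hb, hc]; field_simp; ring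
    set a' := a*w + b*x + c*z with ha'
    set b' := a*x - b*w + c*y with hb'
    set c' := a*z - c*w - b*y with hc'
    have h2 : a'^2 + b'^2 + c'^2 = 1 := by
      have key : a'^2 + b'^2 + c'^2 = (a^2+b^2+c^2) * (w^2+x^2+y^2+z^2) - (a*y+b*z-c*x)^2 := by
        rw [ha', hb', hc']; ring
      rw [key, h0, h1, hq]; ring
    have hK1 : b * (b * cT - c * sT) ≤ 0 := by
      have e : b * (b * cT - c * sT) = y*sT*(y*sT*cT - y*cT*sT)/N^2 := by
        rw [hb, hc]; ring
      rw [e]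
      have : y*sT*(y*sT*cT - y*cT*sT) = 0 := by ring
      rw [this, zero_div]
    have hK2 : b' * (b' * cT - c' * sT) ≤ 0 := by
      have e1 : b' * (b' * cT - c' * sT) =
          ((cT*(x^2+y^2) - sT*(x*z+w*y)) * ((x*cT - z*sT)^2 + y^2*(sT^2+cT^2)))/N^2 := by
        rw [hb', hc', ha, hb, hc]; ring
      rw [e1, pyth, mul_one, ← hNsq, mul_div_assoc, div_self (by positivity), mul_one]
      linarith
    exact ⟨a, b, c, a', b', c', h1, h2, hK1, hK2,
      by linear_combination (-w) * h1,
      by linear_combination (-x) * h1 - c * h0,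
      by linear_combination (-y) * h1 + a * h0,
      by linear_combination (-z) * h1 + b * h0⟩

lemma core_fwd {Θ w x y z : ℝ} (hΘ0 : 0 < Θ) (hΘπ : Θ < π)
    (hmem : MEM Θ w x y z) :
    0 ≤ Real.sin Θ * (x*z + w*y) - Real.cos Θ * (x^2 + y^2) ∨
    0 ≤ Real.sin Θ * (x*z - w*y) - Real.cos Θ * (x^2 + y^2) := by
  set cT := Real.cos Θ with hcT
  set sT := Real.sin Θ with hsT
  have hsT0 : 0 < sT := Real.sin_pos_of_pos_of_lt_pi hΘ0 hΘπ
  have pyth : sT^2 + cT^2 = 1 := Real.sin_sq_add_cos_sq Θ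
  by_contra hcon
  push_neg at hcon
  obtain ⟨hE, hE'⟩ := hcon
  obtain ⟨a, b, c, a', b', c', hn1, hn2, hK1, hK2, hw, hx, hy, hz⟩ := hmem
  rw [← hcT, ← hsT] at hK1 hK2
  have h0 : a*y + b*z - c*x = 0 := by linear_combination a*hy + b*hz - c*hx
  have hB : a*x - b*w + c*y = b' := by
    linear_combination a*hx - b*hw + c*hy + b'*hn1
  have hC : a*z - c*w - b*y = c' := by
    linear_combination a*hz - c*hw - b*hy + c'*hn1
  -- the two linear identities
  have I1 : b' * (y*sT) =
      -((sT * (x*z + w*y) - cT * (x^2 + y^2))*b + (x^2+y^2)*(b*cT - c*sT)) := by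
    linear_combination (-(y*sT))*hB + (x*sT) * h0
  have I2 : (b'*cT - c'*sT) * (y*sT) =
      ((x*cT - z*sT)^2 + y^2)*b + (sT * (x*z - w*y) - cT * (x^2 + y^2))*(b*cT - c*sT) := by
    linear_combination (-(y*sT*cT))*hB + (y*sT*sT)*hC + (sT*(x*cT - z*sT)) * h0 +
      (b*(c*b' - b*c')^2) * pyth + (b*y^2 - b*(c*b'-b*c')^2) * pyth
  by_cases hy0 : y = 0
  · -- planar case
    rw [hy0] at hE h0 I1 I2 hB hC
    have hx0 : x ≠ 0 := by
      intro h
      rw [h] at hE; simp at hE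
    have h0' : b*z - c*x = 0 := by linarith
    have hb0 : b = 0 := by
      have key : b * (b*cT - c*sT) * x^2 = -(b^2) * (sT * (x*z) - cT * (x^2)) := by
        linear_combination (b*sT*x) * h0'
      have h1 : b * (b*cT - c*sT) * x^2 ≤ 0 :=
        mul_nonpos_of_nonpos_of_nonneg hK1 (sq_nonneg x)
      have h2 : 0 ≤ b^2 * (sT * (x*z) - cT * (x^2)) := by linarith [key, h1]
      by_contra hbne
      have hb2 : 0 < b^2 := pow_pos (abs_pos.mpr hbne) 2 |>.trans_eq (sq_abs b)
      have hEx : sT * (x*z) - cT * (x^2) < 0 := by linarith [hE]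
      linarith [mul_pos hb2 (neg_pos.mpr hEx)]
    have hc0 : c = 0 := by
      rw [hb0] at h0'
      simp at h0'
      rcases h0' with h | h
      · exact h
      · exact absurd h hx0
    have ha1 : a^2 = 1 := by rw [hb0, hc0] at hn1; linarith
    have hb' : b' = a*x := by rw [← hB, hb0, hc0]; ring
    have hc' : c' = a*z := by rw [← hC, hb0, hc0]; ring
    have hK2eq : b' * (b'*cT - c'*sT) = a^2 * (-(sT * (x*z) - cT * x^2)) := by
      rw [hb', hc']; ring
    rw [hK2eq, ha1, one_mul] at hK2
    have hEx : sT * (x*z) - cT * (x^2) < 0 := by linarith [hE]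
    linarith
  · -- y ≠ 0
    have hbt : ¬(b = 0 ∧ b*cT - c*sT = 0) := by
      rintro ⟨hb0, ht0⟩
      rw [hb0] at ht0
      have hc0 : c = 0 := by
        simp at ht0
        rcases ht0 with h | h
        · exact h
        · exact absurd h (ne_of_gt hsT0)
      rw [hb0, hc0] at h0 hn1
      simp at h0
      rcases h0 with h | h
      · rw [h] at hn1; simp at hn1
      · exact hy0 h
    have hP : 0 ≤ ((sT * (x*z + w*y) - cT * (x^2 + y^2))*b + (x^2+y^2)*(b*cT - c*sT)) *
        (((x*cT - z*sT)^2 + y^2)*b + (sT * (x*z - w*y) - cT * (x^2 + y^2))*(b*cT - c*sT)) := by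
      have e : ((sT * (x*z + w*y) - cT * (x^2 + y^2))*b + (x^2+y^2)*(b*cT - c*sT)) *
          (((x*cT - z*sT)^2 + y^2)*b + (sT * (x*z - w*y) - cT * (x^2 + y^2))*(b*cT - c*sT))
          = -(b' * (b'*cT - c'*sT)) * (y*sT)^2 := by
        rw [← I2]
        have e2 : (sT * (x*z + w*y) - cT * (x^2 + y^2))*b + (x^2+y^2)*(b*cT - c*sT)
            = -(b' * (y*sT)) := by rw [I1]; ring
        rw [e2]; ring
      rw [e]
      exact mul_nonneg (by linarith) (sq_nonneg _)
    have hn0pos : 0 < x^2 + y^2 := by positivity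
    have hn2pos : 0 < (x*cT - z*sT)^2 + y^2 := by positivity
    -- clean names
    set E1 := sT * (x*z + w*y) - cT * (x^2 + y^2) with hE1d
    set E2 := sT * (x*z - w*y) - cT * (x^2 + y^2) with hE2d
    set t := b*cT - c*sT with htd
    set n0 := x^2 + y^2 with hn0d
    set n2 := (x*cT - z*sT)^2 + y^2 with hn2d
    have hbt' : ¬(b = 0 ∧ t = 0) := hbt
    rcases mul_nonpos_iff.mp hK1 with ⟨hb, htn⟩ | ⟨htn, hb⟩
    · have e1 : E1*b ≤ 0 := mul_nonpos_of_nonpos_of_nonneg hE.le hb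
      have e2 : n0*t ≤ 0 := mul_nonpos_of_nonneg_of_nonpos hn0pos.le htn
      have e3 : 0 ≤ n2*b := mul_nonneg hn2pos.le hb
      have e4 : 0 ≤ E2*t := by
        have h := mul_nonneg (neg_nonneg.mpr hE'.le) (neg_nonneg.mpr htn); linarith [h]
      have hP0 : (E1*b + n0*t) * (n2*b + E2*t) = 0 := by
        have := mul_nonpos_of_nonpos_of_nonneg (by linarith : E1*b + n0*t ≤ 0)
          (by linarith : 0 ≤ n2*b + E2*t)
        linarith
      rcases mul_eq_zero.mp hP0 with h | h
      · have hb0 : b = 0 := by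
          have hEb : E1*b = 0 := by linarith
          rcases mul_eq_zero.mp hEb with h' | h'
          · exact absurd h' (ne_of_lt hE)
          · exact h'
        have ht0 : t = 0 := by
          have hnt : n0*t = 0 := by rw [hb0] at h; linarith [h]
          rcases mul_eq_zero.mp hnt with h' | h'
          · exact absurd h' (ne_of_gt hn0pos)
          · exact h'
        exact hbt' ⟨hb0, ht0⟩
      · have hb0 : b = 0 := by
          have hEb : n2*b = 0 := by linarith
          rcases mul_eq_zero.mp hEb with h' | h'
          · exact absurd h' (ne_of_gt hn2pos)
          · exact h'
        have ht0 : t = 0 := by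
          have hnt : E2*t = 0 := by rw [hb0] at h; linarith [h]
          rcases mul_eq_zero.mp hnt with h' | h'
          · exact absurd h' (ne_of_lt hE')
          · exact h'
        exact hbt' ⟨hb0, ht0⟩
    · have e1 : 0 ≤ E1*b := by
        have h := mul_nonneg (neg_nonneg.mpr hE.le) (neg_nonneg.mpr htn); linarith [h]
      have e2 : 0 ≤ n0*t := mul_nonneg hn0pos.le hb
      have e3 : n2*b ≤ 0 := mul_nonpos_of_nonneg_of_nonpos hn2pos.le htn
      have e4 : E2*t ≤ 0 := mul_nonpos_of_nonpos_of_nonneg hE'.le hb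
      have hP0 : (E1*b + n0*t) * (n2*b + E2*t) = 0 := by
        have := mul_nonpos_of_nonneg_of_nonpos (by linarith : 0 ≤ E1*b + n0*t)
          (by linarith : n2*b + E2*t ≤ 0)
        linarith
      rcases mul_eq_zero.mp hP0 with h | h
      · have hb0 : b = 0 := by
          have hEb : E1*b = 0 := by linarith
          rcases mul_eq_zero.mp hEb with h' | h'
          · exact absurd h' (ne_of_lt hE)
          · exact h'
        have ht0 : t = 0 := by
          have hnt : n0*t = 0 := by rw [hb0] at h; linarith [h]
          rcases mul_eq_zero.mp hnt with h' | h'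
          · exact absurd h' (ne_of_gt hn0pos)
          · exact h'
        exact hbt' ⟨hb0, ht0⟩
      · have hb0 : b = 0 := by
          have hEb : n2*b = 0 := by linarith
          rcases mul_eq_zero.mp hEb with h' | h'
          · exact absurd h' (ne_of_gt hn2pos)
          · exact h'
        have ht0 : t = 0 := by
          have hnt : E2*t = 0 := by rw [hb0] at h; linarith [h]
          rcases mul_eq_zero.mp hnt with h' | h'
          · exact absurd h' (ne_of_lt hE')
          · exact h'
        exact hbt' ⟨hb0, ht0⟩

lemma Rot_mem_iff {Θ : ℝ} (hΘ0 : 0 < Θ) (hΘπ : Θ ≤ π) (θ ψ φ : ℝ) :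
    Rot θ ψ φ ∈ setMul (Gxi Θ) (Gxi Θ) ↔
    MEM Θ (Real.cos (φ/2)) (Real.sin (φ/2) * Real.sin θ * Real.cos ψ)
      (Real.sin (φ/2) * Real.sin θ * Real.sin ψ) (Real.sin (φ/2) * Real.cos θ) := by
  constructor
  · rintro ⟨A, hA, B, hB, hAB⟩
    obtain ⟨a, b, c, hn1, hK1, rfl⟩ := (Gxi_iff hΘ0 hΘπ A).mp hA
    obtain ⟨a', b', c', hn2, hK2, rfl⟩ := (Gxi_iff hΘ0 hΘπ B).mp hB
    rw [Rot_eq_Q, Q_mul] at hAB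
    obtain ⟨h1, h2, h3, h4⟩ := Q_inj hAB
    exact ⟨a, b, c, a', b', c', hn1, hn2, hK1, hK2,
      by rw [h1]; ring, by rw [h2]; ring, by rw [h3]; ring, by rw [h4]; ring⟩
  · rintro ⟨a, b, c, a', b', c', hn1, hn2, hK1, hK2, hw, hx, hy, hz⟩
    refine ⟨Qmat a b 0 c, (Gxi_iff hΘ0 hΘπ _).mpr ⟨a, b, c, hn1, hK1, rfl⟩,
      Qmat a' b' 0 c', (Gxi_iff hΘ0 hΘπ _).mpr ⟨a', b', c', hn2, hK2, rfl⟩, ?_⟩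
    rw [Rot_eq_Q, Q_mul]
    exact Q_congr (by rw [hw]; ring) (by rw [hx]; ring) (by rw [hy]; ring) (by rw [hz]; ring)

lemma phi_cases {φ : ℝ} (h0 : 0 ≤ φ) (h4 : φ < 4*π) (hs : Real.sin (φ/2) = 0) :
    φ = 0 ∨ φ = 2*π := by
  have hπ := Real.pi_pos
  obtain ⟨n, hn⟩ := Real.sin_eq_zero_iff.mp hs
  have hn0 : (0:ℝ) ≤ (n:ℝ) := by
    by_contra hneg
    push_neg at hneg
    have hni : n < 0 := by exact_mod_cast hneg
    have hni' : n ≤ -1 := by omega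
    have : (n:ℝ) ≤ -1 := by exact_mod_cast hni'
    nlinarith
  have hn2 : (n:ℝ) < 2 := by
    by_contra hge
    push_neg at hge
    nlinarith
  have hn0' : 0 ≤ n := by exact_mod_cast hn0
  have hn2' : n < 2 := by exact_mod_cast hn2
  interval_cases n
  · left; simp at hn; linarith
  · right; simp at hn; linarith

lemma div_ineq_aux {sT cT T N : ℝ} (hsT : 0 < sT) (hT : T ≠ 0)
    (h : 0 ≤ sT*(T*N) - cT*T^2) : cT/sT ≤ N/T := by
  rcases lt_or_gt_of_ne hT with hneg | hpos
  · rw [show N/T = (-N)/(-T) from (neg_div_neg_eq _ _).symm,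
      div_le_div_iff₀ hsT (by linarith : (0:ℝ) < -T)]
    nlinarith
  · rw [div_le_div_iff₀ hsT hpos]; nlinarith

lemma div_ineq_aux' {sT cT T N : ℝ} (hsT : 0 < sT) (hT : T ≠ 0)
    (h : cT/sT ≤ N/T) : 0 ≤ sT*(T*N) - cT*T^2 := by
  rcases lt_or_gt_of_ne hT with hneg | hpos
  · rw [show N/T = (-N)/(-T) from (neg_div_neg_eq _ _).symm,
      div_le_div_iff₀ hsT (by linarith : (0:ℝ) < -T)] at h
    nlinarith
  · rw [div_le_div_iff₀ hsT hpos] at h; nlinarith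

lemma bridge {Θ θ ψ φ : ℝ} (hΘ0 : 0 < Θ) (hΘπ : Θ ≤ π) (hθ0 : 0 ≤ θ) (hθπ : θ < π)
    (hφ0 : 0 ≤ φ) (hφ4 : φ < 4*π) :
    MEM Θ (Real.cos (φ/2)) (Real.sin (φ/2) * Real.sin θ * Real.cos ψ)
      (Real.sin (φ/2) * Real.sin θ * Real.sin ψ) (Real.sin (φ/2) * Real.cos θ) ↔
      (φ = 0 ∨ φ = 2*π) ∨
      θ = 0 ∨
      ((Real.sin ψ * Real.cos (φ/2) + Real.cos ψ * Real.sin (φ/2) * Real.cos θ) /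
          (Real.sin (φ/2) * Real.sin θ) ≥ Real.cos Θ / Real.sin Θ ∨
       (-Real.sin ψ * Real.cos (φ/2) + Real.cos ψ * Real.sin (φ/2) * Real.cos θ) /
          (Real.sin (φ/2) * Real.sin θ) ≥ Real.cos Θ / Real.sin Θ) ∨
      Θ = π := by
  have hπ := Real.pi_pos
  have S1 := Real.sin_sq_add_cos_sq ψ
  have S2 := Real.sin_sq_add_cos_sq θ
  have S3 := Real.sin_sq_add_cos_sq (φ/2)
  have hq : (Real.cos (φ/2))^2 + (Real.sin (φ/2) * Real.sin θ * Real.cos ψ)^2 +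
      (Real.sin (φ/2) * Real.sin θ * Real.sin ψ)^2 + (Real.sin (φ/2) * Real.cos θ)^2 = 1 := by
    linear_combination ((Real.sin (φ/2))^2 * (Real.sin θ)^2) * S1 +
      (Real.sin (φ/2))^2 * S2 + S3
  -- E = 0 when sin(φ/2) * sin θ = 0
  have hE0 : Real.sin (φ/2) * Real.sin θ = 0 →
      Real.sin Θ * ((Real.sin (φ/2) * Real.sin θ * Real.cos ψ) * (Real.sin (φ/2) * Real.cos θ) +
        Real.cos (φ/2) * (Real.sin (φ/2) * Real.sin θ * Real.sin ψ)) -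
      Real.cos Θ * ((Real.sin (φ/2) * Real.sin θ * Real.cos ψ)^2 +
        (Real.sin (φ/2) * Real.sin θ * Real.sin ψ)^2) = 0 := by
    intro h0
    linear_combination (Real.sin Θ * (Real.cos ψ * Real.sin (φ/2) * Real.cos θ +
      Real.cos (φ/2) * Real.sin ψ) - Real.cos Θ * (Real.sin (φ/2) * Real.sin θ) *
      ((Real.cos ψ)^2 + (Real.sin ψ)^2)) * h0
  -- identity rewriting E with t and numerator
  have e1 : Real.sin Θ * ((Real.sin (φ/2) * Real.sin θ * Real.cos ψ) * (Real.sin (φ/2) * Real.cos θ) +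
        Real.cos (φ/2) * (Real.sin (φ/2) * Real.sin θ * Real.sin ψ)) -
      Real.cos Θ * ((Real.sin (φ/2) * Real.sin θ * Real.cos ψ)^2 +
        (Real.sin (φ/2) * Real.sin θ * Real.sin ψ)^2) =
      Real.sin Θ * ((Real.sin (φ/2) * Real.sin θ) *
        (Real.sin ψ * Real.cos (φ/2) + Real.cos ψ * Real.sin (φ/2) * Real.cos θ)) -
      Real.cos Θ * (Real.sin (φ/2) * Real.sin θ)^2 := by
    linear_combination (- Real.cos Θ * (Real.sin (φ/2) * Real.sin θ)^2) * S1
  have e2 : Real.sin Θ * ((Real.sin (φ/2) * Real.sin θ * Real.cos ψ) * (Real.sin (φ/2) * Real.cos θ) -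
        Real.cos (φ/2) * (Real.sin (φ/2) * Real.sin θ * Real.sin ψ)) -
      Real.cos Θ * ((Real.sin (φ/2) * Real.sin θ * Real.cos ψ)^2 +
        (Real.sin (φ/2) * Real.sin θ * Real.sin ψ)^2) =
      Real.sin Θ * ((Real.sin (φ/2) * Real.sin θ) *
        (-Real.sin ψ * Real.cos (φ/2) + Real.cos ψ * Real.sin (φ/2) * Real.cos θ)) -
      Real.cos Θ * (Real.sin (φ/2) * Real.sin θ)^2 := by
    linear_combination (- Real.cos Θ * (Real.sin (φ/2) * Real.sin θ)^2) * S1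
  constructor
  · intro hmem
    by_cases hpi : Θ = π
    · exact Or.inr (Or.inr (Or.inr hpi))
    have hΘlt : Θ < π := lt_of_le_of_ne hΘπ hpi
    have hsT : 0 < Real.sin Θ := Real.sin_pos_of_pos_of_lt_pi hΘ0 hΘlt
    by_cases hs0 : Real.sin (φ/2) = 0
    · exact Or.inl (phi_cases hφ0 hφ4 hs0)
    by_cases hth0 : θ = 0
    · exact Or.inr (Or.inl hth0)
    have hsinθ : Real.sin θ ≠ 0 := by
      intro h
      exact hth0 ((Real.sin_eq_zero_iff_of_lt_of_lt (by linarith) hθπ).mp h)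
    have htne : Real.sin (φ/2) * Real.sin θ ≠ 0 := mul_ne_zero hs0 hsinθ
    rcases core_fwd hΘ0 hΘlt hmem with hE | hE
    · refine Or.inr (Or.inr (Or.inl (Or.inl ?_)))
      rw [e1] at hE
      exact div_ineq_aux hsT htne hE
    · refine Or.inr (Or.inr (Or.inl (Or.inr ?_)))
      rw [e2] at hE
      exact div_ineq_aux hsT htne hE
  · intro hrhs
    -- helper: membership via E ≥ 0
    have memE : 0 ≤ Real.sin Θ * ((Real.sin (φ/2) * Real.sin θ * Real.cos ψ) *
          (Real.sin (φ/2) * Real.cos θ) +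
          Real.cos (φ/2) * (Real.sin (φ/2) * Real.sin θ * Real.sin ψ)) -
        Real.cos Θ * ((Real.sin (φ/2) * Real.sin θ * Real.cos ψ)^2 +
          (Real.sin (φ/2) * Real.sin θ * Real.sin ψ)^2) →
        MEM Θ (Real.cos (φ/2)) (Real.sin (φ/2) * Real.sin θ * Real.cos ψ)
          (Real.sin (φ/2) * Real.sin θ * Real.sin ψ) (Real.sin (φ/2) * Real.cos θ) :=
      fun h => mem_of_E hq h
    have memE' : 0 ≤ Real.sin Θ * ((Real.sin (φ/2) * Real.sin θ * Real.cos ψ) *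
          (Real.sin (φ/2) * Real.cos θ) -
          Real.cos (φ/2) * (Real.sin (φ/2) * Real.sin θ * Real.sin ψ)) -
        Real.cos Θ * ((Real.sin (φ/2) * Real.sin θ * Real.cos ψ)^2 +
          (Real.sin (φ/2) * Real.sin θ * Real.sin ψ)^2) →
        MEM Θ (Real.cos (φ/2)) (Real.sin (φ/2) * Real.sin θ * Real.cos ψ)
          (Real.sin (φ/2) * Real.sin θ * Real.sin ψ) (Real.sin (φ/2) * Real.cos θ) := by
      intro h
      have hq2 : (Real.cos (φ/2))^2 + (Real.sin (φ/2) * Real.sin θ * Real.cos ψ)^2 +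
          (-(Real.sin (φ/2) * Real.sin θ * Real.sin ψ))^2 + (Real.sin (φ/2) * Real.cos θ)^2
          = 1 := by linear_combination hq
      have hE2 : 0 ≤ Real.sin Θ * ((Real.sin (φ/2) * Real.sin θ * Real.cos ψ) *
          (Real.sin (φ/2) * Real.cos θ) +
          Real.cos (φ/2) * (-(Real.sin (φ/2) * Real.sin θ * Real.sin ψ))) -
          Real.cos Θ * ((Real.sin (φ/2) * Real.sin θ * Real.cos ψ)^2 +
          (-(Real.sin (φ/2) * Real.sin θ * Real.sin ψ))^2) := by
        have e : Real.sin Θ * ((Real.sin (φ/2) * Real.sin θ * Real.cos ψ) *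
            (Real.sin (φ/2) * Real.cos θ) +
            Real.cos (φ/2) * (-(Real.sin (φ/2) * Real.sin θ * Real.sin ψ))) -
            Real.cos Θ * ((Real.sin (φ/2) * Real.sin θ * Real.cos ψ)^2 +
            (-(Real.sin (φ/2) * Real.sin θ * Real.sin ψ))^2)
            = Real.sin Θ * ((Real.sin (φ/2) * Real.sin θ * Real.cos ψ) *
            (Real.sin (φ/2) * Real.cos θ) -
            Real.cos (φ/2) * (Real.sin (φ/2) * Real.sin θ * Real.sin ψ)) -
            Real.cos Θ * ((Real.sin (φ/2) * Real.sin θ * Real.cos ψ)^2 +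
            (Real.sin (φ/2) * Real.sin θ * Real.sin ψ)^2) := by ring
        rw [e]
        exact h
      have hm := MEM_flip (mem_of_E hq2 hE2)
      rw [neg_neg] at hm
      exact hm
    -- Θ = π case gives E ≥ 0 outright
    have hpicase : Θ = π →
        0 ≤ Real.sin Θ * ((Real.sin (φ/2) * Real.sin θ * Real.cos ψ) *
          (Real.sin (φ/2) * Real.cos θ) +
          Real.cos (φ/2) * (Real.sin (φ/2) * Real.sin θ * Real.sin ψ)) -
        Real.cos Θ * ((Real.sin (φ/2) * Real.sin θ * Real.cos ψ)^2 +
          (Real.sin (φ/2) * Real.sin θ * Real.sin ψ)^2) := by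
      intro hpi
      rw [hpi, Real.sin_pi, Real.cos_pi]
      nlinarith [sq_nonneg (Real.sin (φ/2) * Real.sin θ * Real.cos ψ),
        sq_nonneg (Real.sin (φ/2) * Real.sin θ * Real.sin ψ)]
    rcases hrhs with (h | h) | h | (h | h) | hpi
    · -- φ = 0
      apply memE
      have hsφ : Real.sin (φ/2) = 0 := by rw [h]; norm_num
      rw [hE0 (by rw [hsφ]; ring)]
    · -- φ = 2π
      apply memE
      have hsφ : Real.sin (φ/2) = 0 := by
        rw [h, show 2*π/2 = π by ring, Real.sin_pi]
      rw [hE0 (by rw [hsφ]; ring)]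
    · -- θ = 0
      apply memE
      have hsθ : Real.sin θ = 0 := by rw [h]; exact Real.sin_zero
      rw [hE0 (by rw [hsθ]; ring)]
    · -- first fraction
      by_cases hpi : Θ = π
      · exact memE (hpicase hpi)
      have hΘlt : Θ < π := lt_of_le_of_ne hΘπ hpi
      have hsT : 0 < Real.sin Θ := Real.sin_pos_of_pos_of_lt_pi hΘ0 hΘlt
      by_cases ht0 : Real.sin (φ/2) * Real.sin θ = 0
      · exact memE (le_of_eq (hE0 ht0).symm)
      apply memE
      rw [e1]
      exact div_ineq_aux' hsT ht0 h
    · -- second fraction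
      by_cases hpi : Θ = π
      · exact memE (hpicase hpi)
      have hΘlt : Θ < π := lt_of_le_of_ne hΘπ hpi
      have hsT : 0 < Real.sin Θ := Real.sin_pos_of_pos_of_lt_pi hΘ0 hΘlt
      by_cases ht0 : Real.sin (φ/2) * Real.sin θ = 0
      · exact memE (le_of_eq (hE0 ht0).symm)
      apply memE'
      rw [e2]
      exact div_ineq_aux' hsT ht0 h
    · -- Θ = π
      exact memE (hpicase hpi)

theorem stmt7 (Θ : ℝ) (hΘ : Θ ∈ Set.Ioc 0 π)
    (θ ψ φ : ℝ) (hθ : θ ∈ Set.Ico 0 π) (hψ : ψ ∈ Set.Ico 0 π) (hφ : φ ∈ Set.Ico 0 (4*π)) :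
    Rot θ ψ φ ∈ setMul (Gxi Θ) (Gxi Θ) ↔
      (φ = 0 ∨ φ = 2*π) ∨
      θ = 0 ∨
      ((Real.sin ψ * Real.cos (φ/2) + Real.cos ψ * Real.sin (φ/2) * Real.cos θ) /
          (Real.sin (φ/2) * Real.sin θ) ≥ Real.cos Θ / Real.sin Θ ∨
       (-Real.sin ψ * Real.cos (φ/2) + Real.cos ψ * Real.sin (φ/2) * Real.cos θ) /
          (Real.sin (φ/2) * Real.sin θ) ≥ Real.cos Θ / Real.sin Θ) ∨
      Θ = π := by
  exact (Rot_mem_iff hΘ.1 hΘ.2 θ ψ φ).trans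
    (bridge hΘ.1 hΘ.2 hθ.1 hθ.2 hφ.1 hφ.2)
end

section
/- Let θ ∈ [0,π), ψ ∈ [0,π), φ ∈ [0,4π). Define β₀ = Arg( cos(φ/2) + i·sin(φ/2)·cos θ ) + ψ, β₁ = Arg( cos(φ/2) + i·sin(φ/2)·cos θ ) − ψ, and γ = 2·arcsin( sin θ · sin(φ/2) ). Then R(θ,ψ,φ) = R(0,0,β₀)·R(π/2,0,γ)·R(0,0,β₁); i.e., every SU(2) rotation admits this explicit z–x–z decomposition. -/
open Real

lemma cos_sub_I_sin (w : ℂ) :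
    Complex.cos w - Complex.I * Complex.sin w = Complex.exp (-w * Complex.I) := by
  rw [Complex.exp_mul_I, Complex.cos_neg, Complex.sin_neg]; ring

lemma cos_add_I_sin (w : ℂ) :
    Complex.cos w + Complex.I * Complex.sin w = Complex.exp (w * Complex.I) := by
  rw [Complex.exp_mul_I]; ring

lemma abs_mul_exp_neg (z : ℂ) :
    (↑(‖z‖) : ℂ) * Complex.exp (-↑z.arg * Complex.I) = (starRingEnd ℂ) z := by
  conv_rhs => rw [← Complex.norm_mul_exp_arg_mul_I z]
  rw [map_mul, Complex.conj_ofReal, ← Complex.exp_conj]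
  congr 1
  rw [map_mul, Complex.conj_ofReal, Complex.conj_I]
  ring

theorem stmt9 (θ ψ φ : ℝ) (hθ : θ ∈ Set.Ico 0 π) (hψ : ψ ∈ Set.Ico 0 π)
    (hφ : φ ∈ Set.Ico 0 (4*π)) :
    Rot θ ψ φ =
      Rot 0 0 (Complex.arg ((Real.cos (φ/2) : ℂ) +
          Complex.I * (Real.sin (φ/2) : ℂ) * (Real.cos θ : ℂ)) + ψ) *
      Rot (π/2) 0 (2 * Real.arcsin (Real.sin θ * Real.sin (φ/2))) *
      Rot 0 0 (Complex.arg ((Real.cos (φ/2) : ℂ) +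
          Complex.I * (Real.sin (φ/2) : ℂ) * (Real.cos θ : ℂ)) - ψ) := by
  set s : ℝ := Real.sin θ * Real.sin (φ/2) with hs_def
  have hs1 : -1 ≤ s := by
    nlinarith [Real.sin_le_one θ, Real.neg_one_le_sin θ, Real.sin_le_one (φ/2),
      Real.neg_one_le_sin (φ/2)]
  have hs2 : s ≤ 1 := by
    nlinarith [Real.sin_le_one θ, Real.neg_one_le_sin θ, Real.sin_le_one (φ/2),
      Real.neg_one_le_sin (φ/2)]
  set z : ℂ := Complex.cos (↑φ/2) + Complex.I * Complex.sin (↑φ/2) * Complex.cos ↑θ with hz_def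
  have hz : z = ↑(Real.cos (φ/2)) + ↑(Real.sin (φ/2) * Real.cos θ) * Complex.I := by
    rw [hz_def]; push_cast; ring
  have habs : ‖z‖ = Real.cos (Real.arcsin s) := by
    rw [hz, Complex.norm_add_mul_I, Real.cos_arcsin]
    congr 1
    nlinarith [Real.sin_sq_add_cos_sq (φ/2), Real.sin_sq_add_cos_sq θ]
  have hsin : Complex.sin ↑(Real.arcsin s) = Complex.sin ↑θ * Complex.sin (↑φ/2) := by
    rw [← Complex.ofReal_sin, Real.sin_arcsin hs1 hs2, hs_def]
    push_cast; ring
  have hcos : Complex.cos ↑(Real.arcsin s) = (↑(‖z‖) : ℂ) := by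
    rw [← Complex.ofReal_cos, habs]
  ext i j
  fin_cases i <;> fin_cases j <;>
    simp only [Rot, Matrix.mul_apply, Fin.sum_univ_two, Matrix.cons_val', Matrix.cons_val_zero,
      Matrix.cons_val_one, Matrix.head_cons, Matrix.head_fin_const, Matrix.empty_val',
      Matrix.cons_val_fin_one, Matrix.of_apply, Fin.mk_zero, Fin.mk_one] <;>
    simp <;>
    rw [← hz_def] <;>
    simp only [cos_sub_I_sin, cos_add_I_sin, hsin, hcos]
  · -- (0,0)
    conv_rhs => rw [mul_right_comm, ← Complex.exp_add,
      show -((↑z.arg + ↑ψ)/2) * Complex.I + -((↑z.arg - ↑ψ)/2) * Complex.I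
          = -↑z.arg * Complex.I by ring,
      mul_comm, abs_mul_exp_neg]
    conv_rhs => rw [hz]
    simp only [map_add, map_mul, Complex.conj_ofReal, Complex.conj_I]
    push_cast; ring
  · -- (0,1)
    rw [show Complex.exp (-(Complex.I * ↑ψ))
        = Complex.exp (-((↑z.arg + ↑ψ)/2) * Complex.I) * Complex.exp ((↑z.arg - ↑ψ)/2 * Complex.I) by
      rw [← Complex.exp_add]; congr 1; ring]
    ring
  · -- (1,0)
    rw [show Complex.exp (Complex.I * ↑ψ)
        = Complex.exp ((↑z.arg + ↑ψ)/2 * Complex.I) * Complex.exp (-((↑z.arg - ↑ψ)/2) * Complex.I) by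
      rw [← Complex.exp_add]; congr 1; ring]
    ring
  · -- (1,1)
    conv_rhs => rw [mul_right_comm, ← Complex.exp_add,
      show (↑z.arg + ↑ψ)/2 * Complex.I + (↑z.arg - ↑ψ)/2 * Complex.I
          = ↑z.arg * Complex.I by ring,
      mul_comm, Complex.norm_mul_exp_arg_mul_I]
end
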